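/- arXiv:2109.09387 — 5 statements merged into one kernel-verified Lean document; each statement's English description precedes it below -/
import Mathlib

section
/- Let L be a self-adjoint operator on a Hilbert space generating an analytic semigroup (e^{tL}) with ‖e^{tL}‖ ≤ M e^{-μt} for all t ≥ 0 (M ≥ 1, μ > 0). Then for any α ∈ [0,1) and any ε > 0 and any continuous function f : [0,T] → X, the function t ↦ ∫₀ᵗ e^{(t-s)L/ε²} f(s) ds satisfies the α-Hölder bound ‖t ↦ ∫₀ᵗ e^{(t-s)L/ε²} f(s) ds‖_{C^α([0,T];X)} ≤ C ε^{2-2α} ‖f‖_{C⁰([0,T];X)} for a constant C independent of ε and f. -/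
open MeasureTheory Set
open scoped RealInnerProductSpace

/-- The `C⁰` (sup) norm of `g` on `[0,T]`. -/
noncomputable def supNorm {X : Type*} [NormedAddCommGroup X] (T : ℝ) (g : ℝ → X) : ℝ :=
  ⨆ t : Icc (0:ℝ) T, ‖g (t : ℝ)‖

/-- The `α`-Hölder seminorm of `g` on `[0,T]`. -/
noncomputable def holderSemi {X : Type*} [NormedAddCommGroup X] (α T : ℝ) (g : ℝ → X) : ℝ :=
  ⨆ p : Icc (0:ℝ) T × Icc (0:ℝ) T,
    if (p.1 : ℝ) = (p.2 : ℝ) then 0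
    else ‖g (p.1 : ℝ) - g (p.2 : ℝ)‖ / |(p.1 : ℝ) - (p.2 : ℝ)| ^ α

/-- The `α`-Hölder norm of `g` on `[0,T]`: sup norm plus Hölder seminorm. -/
noncomputable def holderNorm {X : Type*} [NormedAddCommGroup X] (α T : ℝ) (g : ℝ → X) : ℝ :=
  supNorm T g + holderSemi α T g

set_option maxHeartbeats 2000000
set_option linter.unusedSectionVars false
set_option linter.unusedVariables false

section Aux
variable {X : Type*} [NormedAddCommGroup X] [InnerProductSpace ℝ X] [CompleteSpace X]
variable {S : ℝ → X →L[ℝ] X} {M μ : ℝ}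

variable {X : Type*} [NormedAddCommGroup X] [InnerProductSpace ℝ X] [CompleteSpace X]
variable {S : ℝ → X →L[ℝ] X} {M μ : ℝ}

lemma sg_apply (hSadd : ∀ s t : ℝ, 0 ≤ s → 0 ≤ t → S (s + t) = (S s).comp (S t))
    {s t : ℝ} (hs : 0 ≤ s) (ht : 0 ≤ t) (x : X) : S (s + t) x = S s (S t x) := by
  rw [hSadd s t hs ht]; rfl

lemma sg_sq (hSadd : ∀ s t : ℝ, 0 ≤ s → 0 ≤ t → S (s + t) = (S s).comp (S t))
    (hSselfadj : ∀ t : ℝ, 0 ≤ t → ∀ x y : X, ⟪S t x, y⟫ = ⟪x, S t y⟫)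
    {t : ℝ} (ht : 0 ≤ t) : ‖S t‖ ^ 2 ≤ ‖S (t + t)‖ := by
  have key : ∀ x : X, ‖S t x‖ ≤ Real.sqrt ‖S (t + t)‖ * ‖x‖ := by
    intro x
    have h1 : ⟪S (t + t) x, x⟫ = ‖S t x‖ ^ 2 := by
      rw [sg_apply hSadd ht ht x, hSselfadj t ht (S t x) x, real_inner_self_eq_norm_sq]
    have h2 : ‖S t x‖ ^ 2 ≤ ‖S (t + t)‖ * ‖x‖ ^ 2 := by
      rw [← h1]
      calc ⟪S (t + t) x, x⟫ ≤ ‖S (t + t) x‖ * ‖x‖ := real_inner_le_norm _ _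
        _ ≤ (‖S (t + t)‖ * ‖x‖) * ‖x‖ := by
            have := (S (t + t)).le_opNorm x
            exact mul_le_mul_of_nonneg_right this (norm_nonneg x)
        _ = ‖S (t + t)‖ * ‖x‖ ^ 2 := by ring
    have h3 : ‖S t x‖ = Real.sqrt (‖S t x‖ ^ 2) := (Real.sqrt_sq (norm_nonneg _)).symm
    rw [h3]
    calc Real.sqrt (‖S t x‖ ^ 2) ≤ Real.sqrt (‖S (t + t)‖ * ‖x‖ ^ 2) := Real.sqrt_le_sqrt h2
      _ = Real.sqrt ‖S (t + t)‖ * ‖x‖ := by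
          rw [Real.sqrt_mul (norm_nonneg _), Real.sqrt_sq (norm_nonneg _)]
  have h4 : ‖S t‖ ≤ Real.sqrt ‖S (t + t)‖ :=
    ContinuousLinearMap.opNorm_le_bound _ (Real.sqrt_nonneg _) key
  calc ‖S t‖ ^ 2 ≤ Real.sqrt ‖S (t + t)‖ ^ 2 :=
        pow_le_pow_left₀ (norm_nonneg _) h4 2
    _ = ‖S (t + t)‖ := Real.sq_sqrt (norm_nonneg _)

lemma sg_contract (hSadd : ∀ s t : ℝ, 0 ≤ s → 0 ≤ t → S (s + t) = (S s).comp (S t))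
    (hSselfadj : ∀ t : ℝ, 0 ≤ t → ∀ x y : X, ⟪S t x, y⟫ = ⟪x, S t y⟫)
    (hSbound : ∀ t : ℝ, 0 ≤ t → ‖S t‖ ≤ M * Real.exp (-μ * t)) (hM : 1 ≤ M) :
    ∀ t : ℝ, 0 ≤ t → ‖S t‖ ≤ Real.exp (-μ * t) := by
  have hM0 : (0:ℝ) < M := lt_of_lt_of_le one_pos hM
  have main : ∀ n : ℕ, ∀ t : ℝ, 0 ≤ t →
      ‖S t‖ ^ (2 ^ n : ℕ) ≤ M * Real.exp (-μ * ((2:ℝ) ^ n * t)) := by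
    intro n
    induction n with
    | zero => intro t ht; simpa using hSbound t ht
    | succ n ih =>
      intro t ht
      have h1 : ‖S t‖ ^ (2 ^ (n+1) : ℕ) = (‖S t‖ ^ 2) ^ (2 ^ n : ℕ) := by
        rw [← pow_mul]
        congr 1
        ring
      have h2 : (‖S t‖ ^ 2) ^ (2 ^ n : ℕ) ≤ ‖S (t + t)‖ ^ (2 ^ n : ℕ) :=
        pow_le_pow_left₀ (by positivity) (sg_sq hSadd hSselfadj ht) _
      have h3 := ih (t + t) (by linarith)
      rw [h1]
      refine h2.trans (h3.trans (le_of_eq ?_))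
      congr 1
      ring
  intro t ht
  have step : ∀ n : ℕ, ‖S t‖ ≤ M ^ (((2:ℝ) ^ n)⁻¹) * Real.exp (-μ * t) := by
    intro n
    have h2n : (0:ℝ) < (2:ℝ) ^ n := by positivity
    have h := main n t ht
    have hnorm : ‖S t‖ = (‖S t‖ ^ (2 ^ n : ℕ)) ^ (((2:ℝ) ^ n)⁻¹) := by
      rw [← Real.rpow_natCast (‖S t‖) (2 ^ n), ← Real.rpow_mul (norm_nonneg _)]
      push_cast
      rw [mul_inv_cancel₀ (ne_of_gt h2n), Real.rpow_one]
    rw [hnorm]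
    have hle := Real.rpow_le_rpow (by positivity) h (by positivity : (0:ℝ) ≤ ((2:ℝ) ^ n)⁻¹)
    refine hle.trans (le_of_eq ?_)
    rw [Real.mul_rpow hM0.le (Real.exp_nonneg _), ← Real.exp_mul]
    congr 2
    field_simp
  have hlim : Filter.Tendsto (fun n : ℕ => M ^ (((2:ℝ) ^ n)⁻¹) * Real.exp (-μ * t))
      Filter.atTop (nhds (Real.exp (-μ * t))) := by
    have h1 : Filter.Tendsto (fun n : ℕ => ((2:ℝ) ^ n)⁻¹) Filter.atTop (nhds 0) := by
      simpa [inv_pow] using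
        tendsto_pow_atTop_nhds_zero_of_lt_one (by norm_num : (0:ℝ) ≤ 2⁻¹)
          (by norm_num : (2:ℝ)⁻¹ < 1)
    have h2 : Continuous fun u : ℝ => M ^ u * Real.exp (-μ * t) := by
      have : (fun u : ℝ => M ^ u * Real.exp (-μ * t))
          = fun u : ℝ => Real.exp (Real.log M * u) * Real.exp (-μ * t) := by
        funext u; rw [Real.rpow_def_of_pos hM0]
      rw [this]
      exact (Real.continuous_exp.comp (continuous_const.mul continuous_id)).mul continuous_const
    have h3 := (h2.tendsto 0).comp h1
    simpa [Function.comp_def] using h3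
  exact ge_of_tendsto' hlim step

lemma psi_halves (hSadd : ∀ s t : ℝ, 0 ≤ s → 0 ≤ t → S (s + t) = (S s).comp (S t))
    (hSselfadj : ∀ t : ℝ, 0 ≤ t → ∀ x y : X, ⟪S t x, y⟫ = ⟪x, S t y⟫)
    {t : ℝ} (ht : 0 ≤ t) (x : X) : ⟪S t x, x⟫ = ‖S (t/2) x‖ ^ 2 := by
  have ht2 : 0 ≤ t / 2 := by linarith
  calc ⟪S t x, x⟫ = ⟪S (t/2) (S (t/2) x), x⟫ := by
        rw [← sg_apply hSadd ht2 ht2, add_halves]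
    _ = ⟪S (t/2) x, S (t/2) x⟫ := hSselfadj _ ht2 _ _
    _ = ‖S (t/2) x‖ ^ 2 := real_inner_self_eq_norm_sq _

lemma psi_nonneg (hSadd : ∀ s t : ℝ, 0 ≤ s → 0 ≤ t → S (s + t) = (S s).comp (S t))
    (hSselfadj : ∀ t : ℝ, 0 ≤ t → ∀ x y : X, ⟪S t x, y⟫ = ⟪x, S t y⟫)
    {t : ℝ} (ht : 0 ≤ t) (x : X) : 0 ≤ ⟪S t x, x⟫ := by
  rw [psi_halves hSadd hSselfadj ht x]; positivity

lemma psi_mono (hSadd : ∀ s t : ℝ, 0 ≤ s → 0 ≤ t → S (s + t) = (S s).comp (S t))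
    (hSselfadj : ∀ t : ℝ, 0 ≤ t → ∀ x y : X, ⟪S t x, y⟫ = ⟪x, S t y⟫)
    (hcontr1 : ∀ t : ℝ, 0 ≤ t → ‖S t‖ ≤ 1)
    {t s : ℝ} (ht : 0 ≤ t) (hs : 0 ≤ s) (x : X) :
    ⟪S (t + s) x, x⟫ ≤ ⟪S t x, x⟫ := by
  have ht2 : 0 ≤ t / 2 := by linarith
  have hs2 : 0 ≤ s / 2 := by linarith
  rw [psi_halves hSadd hSselfadj (by linarith) x, psi_halves hSadd hSselfadj ht x]
  have h : (t + s) / 2 = s / 2 + t / 2 := by ring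
  rw [h, sg_apply hSadd hs2 ht2]
  apply pow_le_pow_left₀ (norm_nonneg _) ?_
  calc ‖S (s/2) (S (t/2) x)‖ ≤ ‖S (s/2)‖ * ‖S (t/2) x‖ := (S (s/2)).le_opNorm _
    _ ≤ 1 * ‖S (t/2) x‖ := mul_le_mul_of_nonneg_right (hcontr1 _ hs2) (norm_nonneg _)
    _ = ‖S (t/2) x‖ := one_mul _

lemma psi_convex (hSadd : ∀ s t : ℝ, 0 ≤ s → 0 ≤ t → S (s + t) = (S s).comp (S t))
    (hSselfadj : ∀ t : ℝ, 0 ≤ t → ∀ x y : X, ⟪S t x, y⟫ = ⟪x, S t y⟫)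
    {a δ : ℝ} (ha : 0 ≤ a) (hδ : 0 ≤ δ) (x : X) :
    2 * ⟪S (a + δ) x, x⟫ ≤ ⟪S a x, x⟫ + ⟪S (a + δ + δ) x, x⟫ := by
  have ha2 : 0 ≤ a / 2 := by linarith
  have e1 : ⟪S a x, x⟫ = ‖S (a/2) x‖ ^ 2 := psi_halves hSadd hSselfadj ha x
  have e2 : ⟪S (a + δ) x, x⟫ = ⟪S δ (S (a/2) x), S (a/2) x⟫ := by
    have h : a + δ = a/2 + (δ + a/2) := by ring
    rw [h, sg_apply hSadd ha2 (by linarith), sg_apply hSadd hδ ha2, hSselfadj _ ha2]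
  have e3 : ⟪S (a + δ + δ) x, x⟫ = ⟪S δ (S (a/2) x), S δ (S (a/2) x)⟫ := by
    have h : a + δ + δ = a/2 + (δ + (δ + a/2)) := by ring
    rw [h, sg_apply hSadd ha2 (by linarith), sg_apply hSadd hδ (by linarith),
      sg_apply hSadd hδ ha2, hSselfadj _ ha2, hSselfadj δ hδ]
  rw [e1, e2, e3]
  have hexp := norm_sub_sq_real (S (a/2) x) (S δ (S (a/2) x))
  have hsq : 0 ≤ ‖S (a/2) x - S δ (S (a/2) x)‖ ^ 2 := sq_nonneg _
  have hc : ⟪S δ (S (a/2) x), S (a/2) x⟫ = ⟪S (a/2) x, S δ (S (a/2) x)⟫ := real_inner_comm _ _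
  have hself : ⟪S δ (S (a/2) x), S δ (S (a/2) x)⟫ = ‖S δ (S (a/2) x)‖ ^ 2 :=
    real_inner_self_eq_norm_sq _
  linarith [hexp, hsq]

lemma sg_counting (hS0 : S 0 = ContinuousLinearMap.id ℝ X)
    (hSadd : ∀ s t : ℝ, 0 ≤ s → 0 ≤ t → S (s + t) = (S s).comp (S t))
    (hSselfadj : ∀ t : ℝ, 0 ≤ t → ∀ x y : X, ⟪S t x, y⟫ = ⟪x, S t y⟫)
    (hcontr1 : ∀ t : ℝ, 0 ≤ t → ‖S t‖ ≤ 1)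
    {u δ : ℝ} (hu : 0 < u) (hδ : 0 < δ) (x : X) :
    ⟪S u x, x⟫ - ⟪S (u + δ) x, x⟫ ≤ δ / u * ‖x‖ ^ 2 := by
  set ψ : ℝ → ℝ := fun t => ⟪S t x, x⟫ with hψ
  have mono : ∀ t s : ℝ, 0 ≤ t → 0 ≤ s → ψ (t + s) ≤ ψ t := fun t s ht hs =>
    psi_mono hSadd hSselfadj hcontr1 ht hs x
  have Dstep : ∀ a : ℝ, 0 ≤ a → ψ (a + δ) - ψ (a + δ + δ) ≤ ψ a - ψ (a + δ) := by
    intro a ha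
    have := psi_convex hSadd hSselfadj ha hδ.le x
    simp only [hψ] at this ⊢
    linarith
  have Dchain : ∀ m : ℕ, (m : ℝ) * δ ≤ u →
      ψ u - ψ (u + δ) ≤ ψ (u - m * δ) - ψ (u - m * δ + δ) := by
    intro m
    induction m with
    | zero => intro _; simp
    | succ m ih =>
      intro hm
      have hm' : (m : ℝ) * δ ≤ u := by push_cast at hm ⊢; nlinarith
      have h0 : 0 ≤ u - ((m : ℝ) + 1) * δ := by push_cast at hm; linarith
      have hst := Dstep (u - ((m : ℝ) + 1) * δ) h0
      have e1 : u - ((m : ℝ) + 1) * δ + δ = u - (m : ℝ) * δ := by ring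
      rw [e1] at hst
      push_cast
      rw [e1]
      linarith [ih hm']
  have key : ∀ n : ℕ, (n : ℝ) * δ ≤ u →
      ((n : ℝ) + 1) * (ψ u - ψ (u + δ)) ≤ ψ (u - n * δ) - ψ (u + δ) := by
    intro n
    induction n with
    | zero => intro _; simp
    | succ n ih =>
      intro hn
      have hn' : (n : ℝ) * δ ≤ u := by push_cast at hn ⊢; nlinarith
      have h1 := ih hn'
      have h2 := Dchain (n + 1) (by push_cast at hn ⊢; linarith)
      push_cast at h1 h2 ⊢
      have e : u - ((n : ℝ) + 1) * δ + δ = u - (n : ℝ) * δ := by ring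
      rw [e] at h2
      linarith
  set n := ⌊u / δ⌋₊ with hn
  have hudpos : 0 < u / δ := div_pos hu hδ
  have hnle : (n : ℝ) * δ ≤ u := by
    have h := Nat.floor_le hudpos.le
    calc (n : ℝ) * δ ≤ (u / δ) * δ := mul_le_mul_of_nonneg_right h hδ.le
      _ = u := div_mul_cancel₀ u (ne_of_gt hδ)
  have hult : u < ((n : ℝ) + 1) * δ := by
    have h := Nat.lt_floor_add_one (u / δ)
    calc u = (u / δ) * δ := (div_mul_cancel₀ u (ne_of_gt hδ)).symm
      _ < ((n : ℝ) + 1) * δ := mul_lt_mul_of_pos_right h hδ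
  have hk := key n hnle
  have hub : ψ (u - n * δ) - ψ (u + δ) ≤ ‖x‖ ^ 2 := by
    have h1 : ψ (u - n * δ) ≤ ψ 0 := by
      have := mono 0 (u - n * δ) le_rfl (by linarith)
      simpa using this
    have h2 : 0 ≤ ψ (u + δ) := psi_nonneg hSadd hSselfadj (by linarith) x
    have h3 : ψ 0 = ‖x‖ ^ 2 := by
      simp only [hψ, hS0, ContinuousLinearMap.id_apply]
      exact real_inner_self_eq_norm_sq x
    linarith
  have hD0 : 0 ≤ ψ u - ψ (u + δ) := by
    have := mono u δ hu.le hδ.le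
    linarith
  have hD : ((n : ℝ) + 1) * (ψ u - ψ (u + δ)) ≤ ‖x‖ ^ 2 := hk.trans hub
  rw [div_mul_eq_mul_div, le_div_iff₀ hu]
  nlinarith [mul_le_mul_of_nonneg_left hult.le hD0, mul_le_mul_of_nonneg_right hD hδ.le]

lemma sg_pt (hS0 : S 0 = ContinuousLinearMap.id ℝ X)
    (hSadd : ∀ s t : ℝ, 0 ≤ s → 0 ≤ t → S (s + t) = (S s).comp (S t))
    (hSselfadj : ∀ t : ℝ, 0 ≤ t → ∀ x y : X, ⟪S t x, y⟫ = ⟪x, S t y⟫)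
    (hcontr1 : ∀ t : ℝ, 0 ≤ t → ‖S t‖ ≤ 1)
    {u δ : ℝ} (hu : 0 < u) (hδ : 0 < δ) (x : X) :
    ‖S u x - S (u + δ) x‖ ≤ δ / u * ‖x‖ := by
  have hud : (0:ℝ) ≤ u + δ := by linarith
  set c : ℝ := δ / u with hc
  have hc0 : 0 ≤ c := by positivity
  set B : X →L[ℝ] X := S u - S (u + δ) with hB
  have hBz : ∀ z : X, B z = S u z - S (u + δ) z := fun z => rfl
  have bb : ∀ z : X, ⟪B z, z⟫ ≤ c * ‖z‖ ^ 2 := by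
    intro z
    rw [hBz, inner_sub_left]
    exact sg_counting hS0 hSadd hSselfadj hcontr1 hu hδ z
  have b0 : ∀ z : X, 0 ≤ ⟪B z, z⟫ := by
    intro z
    rw [hBz, inner_sub_left]
    have := psi_mono hSadd hSselfadj hcontr1 hu.le hδ.le z
    linarith
  have bsymm : ∀ z w : X, ⟪B z, w⟫ = ⟪B w, z⟫ := by
    intro z w
    rw [hBz, hBz, inner_sub_left, inner_sub_left, hSselfadj u hu.le z w,
      hSselfadj (u + δ) hud z w, real_inner_comm z (S u w), real_inner_comm z (S (u + δ) w)]
  have CS : ∀ z w : X, ⟪B z, w⟫ ^ 2 ≤ (c * ‖z‖ ^ 2) * (c * ‖w‖ ^ 2) := by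
    intro z w
    have hq : ∀ r : ℝ, 0 ≤ ⟪B w, w⟫ * (r * r) + (2 * ⟪B z, w⟫) * r + ⟪B z, z⟫ := by
      intro r
      have h0 := b0 (z + r • w)
      have hexp : B (z + r • w) = B z + r • B w := by
        rw [map_add, B.map_smul]
      rw [hexp, inner_add_left, inner_add_right, inner_add_right,
        real_inner_smul_left, real_inner_smul_right, real_inner_smul_left,
        real_inner_smul_right, bsymm w z] at h0
      nlinarith [h0]
    have hd := discrim_le_zero hq
    rw [discrim] at hd
    have h1 := bb z
    have h2 := bb w
    have h3 := b0 z
    have h4 := b0 w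
    nlinarith [hd, mul_le_mul h1 h2 h4 (by positivity : (0:ℝ) ≤ c * ‖z‖^2)]
  have hfin := CS x (B x)
  have he : ⟪B x, B x⟫ = ‖B x‖ ^ 2 := real_inner_self_eq_norm_sq _
  rw [he] at hfin
  have : ‖B x‖ ≤ c * ‖x‖ := by
    rcases eq_or_lt_of_le (norm_nonneg (B x)) with h0 | h0
    · rw [← h0]; positivity
    · have h1 : ‖B x‖ ^ 2 ≤ (c * ‖x‖) ^ 2 := by nlinarith [hfin, mul_pos h0 h0]
      calc ‖B x‖ = Real.sqrt (‖B x‖ ^ 2) := (Real.sqrt_sq (norm_nonneg _)).symm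
        _ ≤ Real.sqrt ((c * ‖x‖) ^ 2) := Real.sqrt_le_sqrt h1
        _ = c * ‖x‖ := Real.sqrt_sq (by positivity)
  simpa [hBz] using this

lemma sg_decay (hS0 : S 0 = ContinuousLinearMap.id ℝ X)
    (hSadd : ∀ s t : ℝ, 0 ≤ s → 0 ≤ t → S (s + t) = (S s).comp (S t))
    (hSselfadj : ∀ t : ℝ, 0 ≤ t → ∀ x y : X, ⟪S t x, y⟫ = ⟪x, S t y⟫)
    (hcontr : ∀ t : ℝ, 0 ≤ t → ‖S t‖ ≤ Real.exp (-μ * t)) (hμ : 0 < μ)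
    {u δ : ℝ} (hu : 0 < u) (hδ : 0 < δ) (x : X) :
    ‖S u x - S (u + δ) x‖ ≤ 2 * min (δ / u) 1 * Real.exp (-(μ/2) * u) * ‖x‖ := by
  have hcontr1 : ∀ t : ℝ, 0 ≤ t → ‖S t‖ ≤ 1 := fun t ht =>
    (hcontr t ht).trans (Real.exp_le_one_iff.mpr (by nlinarith))
  have hu2 : 0 < u / 2 := by linarith
  have hy : ‖S (u/2) x‖ ≤ Real.exp (-(μ/2) * u) * ‖x‖ := by
    calc ‖S (u/2) x‖ ≤ ‖S (u/2)‖ * ‖x‖ := (S (u/2)).le_opNorm x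
      _ ≤ Real.exp (-μ * (u/2)) * ‖x‖ :=
          mul_le_mul_of_nonneg_right (hcontr (u/2) hu2.le) (norm_nonneg x)
      _ = Real.exp (-(μ/2) * u) * ‖x‖ := by rw [show -μ * (u/2) = -(μ/2) * u by ring]
  have e1 : S u x = S (u/2) (S (u/2) x) := by
    rw [← sg_apply hSadd hu2.le hu2.le, add_halves]
  have e2 : S (u + δ) x = S (u/2 + δ) (S (u/2) x) := by
    have h : u + δ = (u/2 + δ) + u/2 := by ring
    rw [h, sg_apply hSadd (by linarith) hu2.le]
  rw [e1, e2]
  have b1 : ‖S (u/2) (S (u/2) x) - S (u/2 + δ) (S (u/2) x)‖ ≤ δ / (u/2) * ‖S (u/2) x‖ :=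
    sg_pt hS0 hSadd hSselfadj hcontr1 hu2 hδ _
  have b2 : ‖S (u/2) (S (u/2) x) - S (u/2 + δ) (S (u/2) x)‖ ≤ 2 * ‖S (u/2) x‖ := by
    calc ‖S (u/2) (S (u/2) x) - S (u/2 + δ) (S (u/2) x)‖
        ≤ ‖S (u/2) (S (u/2) x)‖ + ‖S (u/2 + δ) (S (u/2) x)‖ := norm_sub_le _ _
      _ ≤ ‖S (u/2)‖ * ‖S (u/2) x‖ + ‖S (u/2 + δ)‖ * ‖S (u/2) x‖ :=
          add_le_add ((S _).le_opNorm _) ((S _).le_opNorm _)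
      _ ≤ 1 * ‖S (u/2) x‖ + 1 * ‖S (u/2) x‖ :=
          add_le_add (mul_le_mul_of_nonneg_right (hcontr1 _ hu2.le) (norm_nonneg _))
            (mul_le_mul_of_nonneg_right (hcontr1 _ (by linarith)) (norm_nonneg _))
      _ = 2 * ‖S (u/2) x‖ := by ring
  have bmin : ‖S (u/2) (S (u/2) x) - S (u/2 + δ) (S (u/2) x)‖
      ≤ 2 * min (δ / u) 1 * ‖S (u/2) x‖ := by
    rcases le_total (δ / u) 1 with h | h
    · rw [min_eq_left h]
      refine b1.trans (le_of_eq ?_)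
      rw [show δ / (u/2) = 2 * (δ / u) by field_simp]
    · rw [min_eq_right h]
      simpa using b2
  have hmin0 : (0:ℝ) ≤ 2 * min (δ / u) 1 := by
    have : (0:ℝ) ≤ min (δ / u) 1 := le_min (by positivity) zero_le_one
    linarith
  calc ‖S (u/2) (S (u/2) x) - S (u/2 + δ) (S (u/2) x)‖
      ≤ 2 * min (δ / u) 1 * ‖S (u/2) x‖ := bmin
    _ ≤ 2 * min (δ / u) 1 * (Real.exp (-(μ/2) * u) * ‖x‖) :=
        mul_le_mul_of_nonneg_left hy hmin0
    _ = 2 * min (δ / u) 1 * Real.exp (-(μ/2) * u) * ‖x‖ := by ring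

lemma sg_cont (hS0 : S 0 = ContinuousLinearMap.id ℝ X)
    (hSadd : ∀ s t : ℝ, 0 ≤ s → 0 ≤ t → S (s + t) = (S s).comp (S t))
    (hSselfadj : ∀ t : ℝ, 0 ≤ t → ∀ x y : X, ⟪S t x, y⟫ = ⟪x, S t y⟫)
    (hcontr1 : ∀ t : ℝ, 0 ≤ t → ‖S t‖ ≤ 1) :
    ContinuousOn S (Ioi (0:ℝ)) := by
  intro u₀ hu₀
  rw [mem_Ioi] at hu₀
  apply ContinuousAt.continuousWithinAt
  have hc : 0 < u₀ / 2 := by linarith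
  have lip : LipschitzOnWith (Real.toNNReal (2 / u₀)) S (Ici (u₀/2)) := by
    apply LipschitzOnWith.of_dist_le_mul
    have main : ∀ a ∈ Ici (u₀/2), ∀ b ∈ Ici (u₀/2), b ≤ a →
        dist (S a) (S b) ≤ 2 / u₀ * dist a b := by
      intro a ha b hb hab
      rw [mem_Ici] at ha hb
      rcases eq_or_lt_of_le hab with rfl | hlt
      · simp [dist_self]
      · have hδ : 0 < a - b := by linarith
        have hbpos : 0 < b := lt_of_lt_of_le hc hb
        have hop : ‖S a - S b‖ ≤ (a - b) / b := by
          apply ContinuousLinearMap.opNorm_le_bound _ (by positivity)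
          intro x
          have := sg_pt hS0 hSadd hSselfadj hcontr1 hbpos hδ x
          rw [show b + (a - b) = a by ring] at this
          calc ‖(S a - S b) x‖ = ‖S b x - S a x‖ := by
                rw [ContinuousLinearMap.sub_apply, norm_sub_rev]
            _ ≤ (a - b) / b * ‖x‖ := this
        rw [dist_eq_norm, Real.dist_eq, abs_of_pos hδ]
        refine hop.trans ?_
        rw [div_le_iff₀ hbpos]
        rw [div_mul_eq_mul_div, div_mul_eq_mul_div, le_div_iff₀ (by linarith : (0:ℝ) < u₀)]
        nlinarith
    intro a ha b hb
    rw [Real.coe_toNNReal _ (by positivity)]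
    rcases le_total b a with h | h
    · exact main a ha b hb h
    · rw [dist_comm (S a) (S b), dist_comm a b]
      exact main b hb a ha h
  exact (lip.continuousOn).continuousAt (Ici_mem_nhds (by linarith : u₀/2 < u₀))


end Aux

lemma gamma_integrable {β c : ℝ} (hβ0 : 0 ≤ β) (hβ1 : β < 1) (hc : 0 < c) :
    IntegrableOn (fun v : ℝ => v ^ (-β) * Real.exp (-(c * v))) (Ioi (0:ℝ)) := by
  have h := integrableOn_rpow_mul_exp_neg_mul_rpow (by linarith : (-1:ℝ) < -β) one_pos hc
  refine h.congr_fun (fun x hx => ?_) measurableSet_Ioi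
  simp only [Real.rpow_one]
  ring_nf

lemma gamma_value {β c : ℝ} (hβ0 : 0 ≤ β) (hβ1 : β < 1) (hc : 0 < c) :
    ∫ v in Ioi (0:ℝ), v ^ (-β) * Real.exp (-(c * v))
      = (1/c) ^ (1-β) * Real.Gamma (1-β) := by
  have h := Real.integral_rpow_mul_exp_neg_mul_Ioi (by linarith : (0:ℝ) < 1 - β) hc
  simpa [show (1:ℝ) - β - 1 = -β by ring] using h

lemma GB_integrable {β c a b : ℝ} (hβ0 : 0 ≤ β) (hβ1 : β < 1) (hc : 0 < c) (hab : a ≤ b) :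
    IntervalIntegrable (fun s => (b - s) ^ (-β) * Real.exp (-(c * (b - s)))) volume a b := by
  have h1 : IntervalIntegrable (fun v : ℝ => v ^ (-β) * Real.exp (-(c * v))) volume 0 (b - a) := by
    rw [intervalIntegrable_iff_integrableOn_Ioc_of_le (by linarith)]
    exact (gamma_integrable hβ0 hβ1 hc).mono_set Ioc_subset_Ioi_self
  have h2 := h1.comp_sub_left b
  simp only [sub_zero, sub_sub_cancel] at h2
  exact h2.symm

lemma GB_value {β c a b : ℝ} (hβ0 : 0 ≤ β) (hβ1 : β < 1) (hc : 0 < c) (hab : a ≤ b) :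
    ∫ s in a..b, (b - s) ^ (-β) * Real.exp (-(c * (b - s)))
      ≤ (1/c) ^ (1-β) * Real.Gamma (1-β) := by
  rw [intervalIntegral.integral_comp_sub_left (fun v => v ^ (-β) * Real.exp (-(c * v))) b]
  rw [sub_self, intervalIntegral.integral_of_le (by linarith : (0:ℝ) ≤ b - a)]
  rw [← gamma_value hβ0 hβ1 hc]
  apply setIntegral_mono_set (gamma_integrable hβ0 hβ1 hc)
  · filter_upwards [ae_restrict_mem measurableSet_Ioi] with v hv
    have : (0:ℝ) < v := hv
    positivity
  · exact HasSubset.Subset.eventuallyLE Ioc_subset_Ioi_self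

lemma min_le_rpow_mul {x y θ : ℝ} (hx : 0 < x) (hy : 0 < y) (h0 : 0 ≤ θ) (h1 : θ ≤ 1) :
    min x y ≤ x ^ θ * y ^ (1 - θ) := by
  have hm : 0 < min x y := lt_min hx hy
  calc min x y = (min x y) ^ θ * (min x y) ^ (1-θ) := by
        rw [← Real.rpow_add hm]; norm_num
    _ ≤ x ^ θ * y ^ (1-θ) :=
        mul_le_mul (Real.rpow_le_rpow hm.le (min_le_left _ _) h0)
          (Real.rpow_le_rpow hm.le (min_le_right _ _) (by linarith)) (by positivity) (by positivity)

lemma min_one_le_rpow {x θ : ℝ} (hx : 0 < x) (h0 : 0 ≤ θ) (h1 : θ ≤ 1) : min x 1 ≤ x ^ θ := by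
  rcases le_total x 1 with h | h
  · rw [min_eq_left h]
    calc x = x ^ (1:ℝ) := (Real.rpow_one x).symm
      _ ≤ x ^ θ := Real.rpow_le_rpow_of_exponent_ge hx h h1
  · rw [min_eq_right h]
    exact Real.one_le_rpow h h0

lemma le_supNorm {X : Type*} [NormedAddCommGroup X] {f : ℝ → X} {T : ℝ}
    (hf : ContinuousOn f (Icc 0 T)) {s : ℝ} (hs : s ∈ Icc (0:ℝ) T) :
    ‖f s‖ ≤ supNorm T f := by
  have hbdd : BddAbove (range fun t : Icc (0:ℝ) T => ‖f (t : ℝ)‖) := by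
    have h1 : IsCompact ((fun s => ‖f s‖) '' Icc (0:ℝ) T) :=
      isCompact_Icc.image_of_continuousOn hf.norm
    have h2 : (range fun t : Icc (0:ℝ) T => ‖f (t : ℝ)‖) = (fun s => ‖f s‖) '' Icc (0:ℝ) T := by
      ext r
      constructor
      · rintro ⟨⟨t, ht⟩, rfl⟩; exact ⟨t, ht, rfl⟩
      · rintro ⟨t, ht, rfl⟩; exact ⟨⟨t, ht⟩, rfl⟩
    rw [h2]
    exact h1.bddAbove
  exact le_ciSup hbdd ⟨s, hs⟩

lemma supNorm_nonneg {X : Type*} [NormedAddCommGroup X] (T : ℝ) (f : ℝ → X) : 0 ≤ supNorm T f :=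
  Real.iSup_nonneg fun _ => norm_nonneg _

/-- If `L` is self-adjoint and generates an analytic semigroup `S t = e^{tL}`
with `‖S t‖ ≤ M e^{-μ t}`, then for `α ∈ [0,1)` there is a constant `C` such that for all
`ε > 0` and continuous `f : [0,T] → X`,
`‖t ↦ ∫₀ᵗ e^{(t-s)L/ε²} f(s) ds‖_{C^α([0,T];X)} ≤ C ε^{2-2α} ‖f‖_{C⁰([0,T];X)}`. -/
theorem stmt0 {X : Type*} [NormedAddCommGroup X] [InnerProductSpace ℝ X] [CompleteSpace X]
    (S : ℝ → X →L[ℝ] X) (M μ : ℝ) (hM : 1 ≤ M) (hμ : 0 < μ)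
    (hS0 : S 0 = ContinuousLinearMap.id ℝ X)
    (hSadd : ∀ s t : ℝ, 0 ≤ s → 0 ≤ t → S (s + t) = (S s).comp (S t))
    (hSselfadj : ∀ t : ℝ, 0 ≤ t → ∀ x y : X, ⟪S t x, y⟫ = ⟪x, S t y⟫)
    (hSbound : ∀ t : ℝ, 0 ≤ t → ‖S t‖ ≤ M * Real.exp (-μ * t))
    (T α : ℝ) (hT : 0 < T) (hα : α ∈ Ico (0:ℝ) 1) :
    ∃ C > 0, ∀ ε : ℝ, 0 < ε → ∀ f : ℝ → X, ContinuousOn f (Icc 0 T) →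
      holderNorm α T (fun t => ∫ s in (0:ℝ)..t, S ((t - s) / ε ^ 2) (f s)) ≤
        C * ε ^ (2 - 2 * α) * supNorm T f := by
  obtain ⟨hα0, hα1⟩ := hα
  have hcontr : ∀ t : ℝ, 0 ≤ t → ‖S t‖ ≤ Real.exp (-μ * t) :=
    sg_contract hSadd hSselfadj hSbound hM
  have hcontr1 : ∀ t : ℝ, 0 ≤ t → ‖S t‖ ≤ 1 := fun t ht =>
    (hcontr t ht).trans (Real.exp_le_one_iff.mpr (by nlinarith))
  have hΓ : 0 < Real.Gamma (1 - α) := Real.Gamma_pos_of_pos (by linarith)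
  set Csup : ℝ := max (1/μ) T with hCsup
  set Chol : ℝ := (μ ^ (1-α))⁻¹ + 2 * Real.Gamma (1-α) * (2/μ) ^ (1-α) with hChol
  have hCsup0 : 0 < Csup := lt_max_of_lt_left (by positivity)
  have hChol0 : 0 < Chol := by
    rw [hChol]
    have h1 : (0:ℝ) < (μ ^ (1-α))⁻¹ := by positivity
    have h2 : (0:ℝ) < 2 * Real.Gamma (1-α) * (2/μ) ^ (1-α) := by positivity
    linarith
  refine ⟨Csup + Chol, by linarith, ?_⟩
  intro ε hε f hf
  set N := supNorm T f with hN
  have hN0 : 0 ≤ N := supNorm_nonneg T f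
  have hfle : ∀ s ∈ Icc (0:ℝ) T, ‖f s‖ ≤ N := fun s hs => le_supNorm hf hs
  have hε2 : (0:ℝ) < ε ^ 2 := by positivity
  set E := ε ^ (2 - 2*α) with hE
  have hE0 : 0 < E := Real.rpow_pos_of_pos hε _
  have hε2E : (ε ^ 2 : ℝ) ^ (1 - α) = E := by
    rw [← Real.rpow_natCast ε 2, ← Real.rpow_mul hε.le, hE]
    norm_num
    ring_nf
  set g : ℝ → X := fun t => ∫ s in (0:ℝ)..t, S ((t - s) / ε ^ 2) (f s) with hg
  -- pointwise norm bound for the integrand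
  have hptb : ∀ t s : ℝ, s ≤ t → s ∈ Icc (0:ℝ) T →
      ‖S ((t - s) / ε ^ 2) (f s)‖ ≤ Real.exp (-(μ / ε ^ 2) * (t - s)) * N := by
    intro t s hst hs
    calc ‖S ((t - s) / ε ^ 2) (f s)‖ ≤ ‖S ((t - s) / ε ^ 2)‖ * ‖f s‖ := (S _).le_opNorm _
      _ ≤ Real.exp (-μ * ((t - s) / ε ^ 2)) * N := by
          apply mul_le_mul (hcontr _ (div_nonneg (by linarith) hε2.le)) (hfle s hs) (norm_nonneg _)
            (Real.exp_nonneg _)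
      _ = Real.exp (-(μ / ε ^ 2) * (t - s)) * N := by
          rw [show -μ * ((t - s) / ε ^ 2) = -(μ / ε ^ 2) * (t - s) by ring]
  have hptb1 : ∀ t s : ℝ, s ≤ t → s ∈ Icc (0:ℝ) T →
      ‖S ((t - s) / ε ^ 2) (f s)‖ ≤ N := by
    intro t s hst hs
    refine (hptb t s hst hs).trans ?_
    have : Real.exp (-(μ / ε ^ 2) * (t - s)) ≤ 1 := Real.exp_le_one_iff.mpr (by
      have : 0 ≤ (μ / ε ^ 2) * (t - s) := mul_nonneg (by positivity) (by linarith)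
      linarith)
    nlinarith
  -- integrability on [0, c]
  have hInt : ∀ c : ℝ, 0 ≤ c → c ≤ T →
      IntervalIntegrable (fun s => S ((c - s) / ε ^ 2) (f s)) volume 0 c := by
    intro c hc0 hcT
    rcases eq_or_lt_of_le hc0 with rfl | hc
    · exact ⟨by rw [Ioc_self]; exact integrableOn_empty, by rw [Ioc_self]; exact integrableOn_empty⟩
    · rw [intervalIntegrable_iff_integrableOn_Ioo_of_le hc0]
      have hsub : Ioo (0:ℝ) c ⊆ Icc 0 T := fun s hs => ⟨hs.1.le, hs.2.le.trans hcT⟩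
      have hmeas : ContinuousOn (fun s => S ((c - s) / ε ^ 2) (f s)) (Ioo 0 c) := by
        have hτ : ContinuousOn (fun s : ℝ => S ((c - s) / ε ^ 2)) (Ioo 0 c) := by
          apply (sg_cont hS0 hSadd hSselfadj hcontr1).comp
          · exact (continuousOn_const.sub continuousOn_id).div_const _
          · intro s hs
            exact mem_Ioi.mpr (div_pos (by linarith [hs.2]) hε2)
        exact hτ.clm_apply (hf.mono hsub)
      apply Integrable.mono' (g := fun _ => N)
      · exact integrableOn_const measure_Ioo_lt_top.ne
      · exact hmeas.aestronglyMeasurable measurableSet_Ioo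
      · filter_upwards [ae_restrict_mem measurableSet_Ioo] with s hs
        exact hptb1 c s hs.2.le (hsub hs)
  -- sup norm bound at each t
  have hsup : ∀ t ∈ Icc (0:ℝ) T, ‖g t‖ ≤ Csup * E * N := by
    intro t ht
    have b1 : ‖g t‖ ≤ N * T := by
      have h := intervalIntegral.norm_integral_le_of_norm_le_const (C := N)
        (f := fun s => S ((t - s) / ε ^ 2) (f s)) (a := 0) (b := t) ?_
      · refine h.trans ?_
        rw [sub_zero, abs_of_nonneg ht.1]
        exact mul_le_mul_of_nonneg_left ht.2 hN0
      · intro s hs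
        rw [uIoc_of_le ht.1] at hs
        exact hptb1 t s hs.2 ⟨hs.1.le, hs.2.trans ht.2⟩
    have b2 : ‖g t‖ ≤ N * (ε ^ 2 / μ) := by
      have hc : 0 < μ / ε ^ 2 := by positivity
      have h := intervalIntegral.norm_integral_le_of_norm_le
        (f := fun s => S ((t - s) / ε ^ 2) (f s)) (a := 0) (b := t) (μ := volume) (hab := ht.1)
        (g := fun s => N * ((t - s) ^ (-(0:ℝ)) * Real.exp (-(μ / ε ^ 2 * (t - s))))) ?_ ?_
      · refine h.trans ?_
        rw [intervalIntegral.integral_const_mul]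
        have hint0 : 0 ≤ ∫ s in (0:ℝ)..t, ((t - s) ^ (-(0:ℝ)) * Real.exp (-(μ / ε ^ 2 * (t - s)))) := by
          apply intervalIntegral.integral_nonneg ht.1
          intro s hs
          have : (0:ℝ) ≤ t - s := by linarith [hs.2]
          positivity
        have hval := GB_value (β := 0) le_rfl one_pos hc ht.1
        calc N * ∫ s in (0:ℝ)..t, ((t - s) ^ (-(0:ℝ)) * Real.exp (-(μ / ε ^ 2 * (t - s))))
            ≤ N * ((1/(μ / ε ^ 2)) ^ ((1:ℝ)-0) * Real.Gamma (1-0)) :=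
              mul_le_mul_of_nonneg_left hval hN0
          _ = N * (ε ^ 2 / μ) := by
              rw [sub_zero, Real.Gamma_one, Real.rpow_one, one_div, inv_div]
              ring
      · filter_upwards with s hs
        have h1 := hptb t s hs.2 ⟨hs.1.le, hs.2.trans ht.2⟩
        calc ‖S ((t - s) / ε ^ 2) (f s)‖ ≤ Real.exp (-(μ / ε ^ 2) * (t - s)) * N := h1
          _ = N * ((t - s) ^ (-(0:ℝ)) * Real.exp (-(μ / ε ^ 2 * (t - s)))) := by
              rw [neg_zero, Real.rpow_zero]
              rw [show -(μ / ε ^ 2) * (t - s) = -(μ / ε ^ 2 * (t - s)) by ring]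
              ring
      · exact (GB_integrable (β := 0) le_rfl one_pos hc ht.1).const_mul N
    rcases le_total ε 1 with hle | hle
    · have hεE : ε ^ 2 ≤ E := by
        rw [hE, ← Real.rpow_natCast ε 2]
        apply Real.rpow_le_rpow_of_exponent_ge hε hle
        push_cast
        linarith
      have : ε ^ 2 / μ ≤ Csup * E := by
        calc ε ^ 2 / μ ≤ E / μ := by gcongr
          _ = (1/μ) * E := by ring
          _ ≤ Csup * E := mul_le_mul_of_nonneg_right (le_max_left _ _) hE0.le
      calc ‖g t‖ ≤ N * (ε ^ 2 / μ) := b2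
        _ ≤ N * (Csup * E) := mul_le_mul_of_nonneg_left this hN0
        _ = Csup * E * N := by ring
    · refine b1.trans ?_
      have h1E : 1 ≤ E := by
        rw [hE]
        exact Real.one_le_rpow hle (by linarith)
      calc N * T ≤ N * (Csup * E) := by
            apply mul_le_mul_of_nonneg_left ?_ hN0
            calc T = T * 1 := (mul_one T).symm
              _ ≤ Csup * E := mul_le_mul (le_max_right _ _) h1E zero_le_one hCsup0.le
        _ = Csup * E * N := by ring
  -- key difference bound
  have hdiff : ∀ t' t : ℝ, 0 ≤ t' → t' < t → t ≤ T →
      ‖g t - g t'‖ ≤ Chol * E * N * (t - t') ^ α := by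
    intro t' t ht'0 htt' htT
    have ht0 : 0 ≤ t := le_trans ht'0 htt'.le
    have ht'T : t' ≤ T := htt'.le.trans htT
    have hhpos : 0 < t - t' := by linarith
    have hIt : IntervalIntegrable (fun s => S ((t - s) / ε ^ 2) (f s)) volume 0 t :=
      hInt t ht0 htT
    have hIt1 : IntervalIntegrable (fun s => S ((t - s) / ε ^ 2) (f s)) volume 0 t' :=
      hIt.mono_set (by rw [uIcc_of_le ht'0, uIcc_of_le ht0]; exact Icc_subset_Icc le_rfl htt'.le)
    have hIt2 : IntervalIntegrable (fun s => S ((t - s) / ε ^ 2) (f s)) volume t' t :=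
      hIt.mono_set (by rw [uIcc_of_le htt'.le, uIcc_of_le ht0]; exact Icc_subset_Icc ht'0 le_rfl)
    have hIt' : IntervalIntegrable (fun s => S ((t' - s) / ε ^ 2) (f s)) volume 0 t' :=
      hInt t' ht'0 ht'T
    have split : g t = (∫ s in (0:ℝ)..t', S ((t - s) / ε ^ 2) (f s))
        + ∫ s in t'..t, S ((t - s) / ε ^ 2) (f s) :=
      (intervalIntegral.integral_add_adjacent_intervals hIt1 hIt2).symm
    have egt' : g t' = ∫ s in (0:ℝ)..t', S ((t' - s) / ε ^ 2) (f s) := rfl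
    have e : g t - g t' = (∫ s in (0:ℝ)..t',
          (S ((t - s) / ε ^ 2) (f s) - S ((t' - s) / ε ^ 2) (f s)))
        + ∫ s in t'..t, S ((t - s) / ε ^ 2) (f s) := by
      rw [split, egt', intervalIntegral.integral_sub hIt1 hIt']
      abel
    have hb1 : ‖∫ s in t'..t, S ((t - s) / ε ^ 2) (f s)‖ ≤ N * min (t - t') (ε ^ 2 / μ) := by
      have b1a : ‖∫ s in t'..t, S ((t - s) / ε ^ 2) (f s)‖ ≤ N * (t - t') := by
        have h := intervalIntegral.norm_integral_le_of_norm_le_const (C := N)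
          (f := fun s => S ((t - s) / ε ^ 2) (f s)) (a := t') (b := t) ?_
        · simpa [abs_of_pos hhpos] using h
        · intro s hs
          rw [uIoc_of_le htt'.le] at hs
          exact hptb1 t s hs.2 ⟨le_trans ht'0 hs.1.le, hs.2.trans htT⟩
      have b1b : ‖∫ s in t'..t, S ((t - s) / ε ^ 2) (f s)‖ ≤ N * (ε ^ 2 / μ) := by
        have hc : 0 < μ / ε ^ 2 := by positivity
        have h := intervalIntegral.norm_integral_le_of_norm_le
          (f := fun s => S ((t - s) / ε ^ 2) (f s)) (a := t') (b := t) (μ := volume) (hab := htt'.le)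
          (g := fun s => N * ((t - s) ^ (-(0:ℝ)) * Real.exp (-(μ / ε ^ 2 * (t - s))))) ?_ ?_
        · refine h.trans ?_
          rw [intervalIntegral.integral_const_mul]
          have hint0 : 0 ≤ ∫ s in t'..t,
              ((t - s) ^ (-(0:ℝ)) * Real.exp (-(μ / ε ^ 2 * (t - s)))) := by
            apply intervalIntegral.integral_nonneg htt'.le
            intro s hs
            have : (0:ℝ) ≤ t - s := by linarith [hs.2]
            positivity
          have hval := GB_value (β := 0) le_rfl one_pos hc htt'.le
          calc N * ∫ s in t'..t, ((t - s) ^ (-(0:ℝ)) * Real.exp (-(μ / ε ^ 2 * (t - s))))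
              ≤ N * ((1/(μ / ε ^ 2)) ^ ((1:ℝ)-0) * Real.Gamma (1-0)) :=
                mul_le_mul_of_nonneg_left hval hN0
            _ = N * (ε ^ 2 / μ) := by
                rw [sub_zero, Real.Gamma_one, Real.rpow_one, one_div, inv_div]
                ring
        · filter_upwards with s hs
          have h1 := hptb t s hs.2 ⟨le_trans ht'0 hs.1.le, hs.2.trans htT⟩
          calc ‖S ((t - s) / ε ^ 2) (f s)‖ ≤ Real.exp (-(μ / ε ^ 2) * (t - s)) * N := h1
            _ = N * ((t - s) ^ (-(0:ℝ)) * Real.exp (-(μ / ε ^ 2 * (t - s)))) := by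
                rw [neg_zero, Real.rpow_zero]
                rw [show -(μ / ε ^ 2) * (t - s) = -(μ / ε ^ 2 * (t - s)) by ring]
                ring
        · exact (GB_integrable (β := 0) le_rfl one_pos hc htt'.le).const_mul N
      rcases le_total (t - t') (ε ^ 2 / μ) with h | h
      · rw [min_eq_left h]; exact b1a
      · rw [min_eq_right h]; exact b1b
    have hb1' : N * min (t - t') (ε ^ 2 / μ) ≤ (μ ^ (1-α))⁻¹ * E * N * (t - t') ^ α := by
      have hmin := min_le_rpow_mul hhpos (div_pos hε2 hμ) hα0 hα1.le
      have heq : (ε ^ 2 / μ) ^ (1-α) = E * (μ ^ (1-α))⁻¹ := by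
        rw [Real.div_rpow hε2.le hμ.le, hε2E, div_eq_mul_inv]
      calc N * min (t - t') (ε ^ 2 / μ) ≤ N * ((t - t') ^ α * (ε ^ 2 / μ) ^ (1-α)) :=
            mul_le_mul_of_nonneg_left hmin hN0
        _ = (μ ^ (1-α))⁻¹ * E * N * (t - t') ^ α := by rw [heq]; ring
    set c2 := μ / (2 * ε ^ 2) with hc2
    have hc2p : 0 < c2 := by rw [hc2]; positivity
    have hb2 : ‖∫ s in (0:ℝ)..t', (S ((t - s) / ε ^ 2) (f s) - S ((t' - s) / ε ^ 2) (f s))‖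
        ≤ (2 * N * (t - t') ^ α) * ((1/c2) ^ (1-α) * Real.Gamma (1-α)) := by
      have h := intervalIntegral.norm_integral_le_of_norm_le
        (f := fun s => S ((t - s) / ε ^ 2) (f s) - S ((t' - s) / ε ^ 2) (f s))
        (a := 0) (b := t') (μ := volume) (hab := ht'0)
        (g := fun s => (2 * N * (t - t') ^ α) *
          ((t' - s) ^ (-α) * Real.exp (-(c2 * (t' - s))))) ?_ ?_
      · refine h.trans ?_
        rw [intervalIntegral.integral_const_mul]
        have hint0 : 0 ≤ ∫ s in (0:ℝ)..t',
            ((t' - s) ^ (-α) * Real.exp (-(c2 * (t' - s)))) := by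
          apply intervalIntegral.integral_nonneg ht'0
          intro s hs
          have h1 : (0:ℝ) ≤ t' - s := by linarith [hs.2]
          positivity
        exact mul_le_mul_of_nonneg_left (GB_value hα0 hα1 hc2p ht'0) (by positivity)
      · have hne : ∀ᵐ s ∂volume, s ≠ t' := by
          refine (MeasureTheory.ae_iff).mpr ?_
          have he : {s : ℝ | ¬ s ≠ t'} = {t'} := by ext z; simp
          rw [he]
          exact Real.volume_singleton
        filter_upwards [hne] with s hst hs
        have hs1 : 0 < s := hs.1
        have hs2 : s < t' := lt_of_le_of_ne hs.2 hst
        have hupos : 0 < (t' - s) / ε ^ 2 := div_pos (by linarith) hε2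
        have hδpos : 0 < (t - t') / ε ^ 2 := div_pos hhpos hε2
        have harg : (t - s) / ε ^ 2 = (t' - s) / ε ^ 2 + (t - t') / ε ^ 2 := by ring
        rw [harg]
        have hdec := sg_decay hS0 hSadd hSselfadj hcontr hμ hupos hδpos (f s)
        have hratio : ((t - t') / ε ^ 2) / ((t' - s) / ε ^ 2) = (t - t') / (t' - s) := by
          have h1 : (ε:ℝ) ^ 2 ≠ 0 := ne_of_gt hε2
          have h2 : t' - s ≠ 0 := ne_of_gt (by linarith)
          field_simp
        have hm := min_one_le_rpow (div_pos hhpos (by linarith : (0:ℝ) < t' - s)) hα0 hα1.le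
        have hfN := hfle s ⟨hs1.le, hs2.le.trans ht'T⟩
        calc ‖S ((t' - s) / ε ^ 2 + (t - t') / ε ^ 2) (f s) - S ((t' - s) / ε ^ 2) (f s)‖
            = ‖S ((t' - s) / ε ^ 2) (f s) - S ((t' - s) / ε ^ 2 + (t - t') / ε ^ 2) (f s)‖ :=
              norm_sub_rev _ _
          _ ≤ 2 * min (((t - t') / ε ^ 2) / ((t' - s) / ε ^ 2)) 1 *
              Real.exp (-(μ/2) * ((t' - s) / ε ^ 2)) * ‖f s‖ := hdec
          _ ≤ 2 * ((t - t') / (t' - s)) ^ α *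
              Real.exp (-(μ/2) * ((t' - s) / ε ^ 2)) * N := by
              rw [hratio]
              have hR : (0:ℝ) ≤ (t - t') / (t' - s) := le_of_lt (div_pos hhpos (by linarith))
              have h2 : (0:ℝ) ≤ 2 * ((t - t') / (t' - s)) ^ α *
                  Real.exp (-(μ/2) * ((t' - s) / ε ^ 2)) :=
                mul_nonneg (mul_nonneg (by norm_num) (Real.rpow_nonneg hR α)) (Real.exp_nonneg _)
              apply mul_le_mul ?_ hfN (norm_nonneg _) h2
              apply mul_le_mul_of_nonneg_right ?_ (Real.exp_nonneg _)
              exact mul_le_mul_of_nonneg_left hm (by norm_num)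
          _ = (2 * N * (t - t') ^ α) * ((t' - s) ^ (-α) * Real.exp (-(c2 * (t' - s)))) := by
              have e1 : ((t - t') / (t' - s)) ^ α = (t - t') ^ α * (t' - s) ^ (-α) := by
                rw [Real.div_rpow hhpos.le (by linarith : (0:ℝ) ≤ t' - s),
                  Real.rpow_neg (by linarith : (0:ℝ) ≤ t' - s), div_eq_mul_inv]
              have e2 : -(μ/2) * ((t' - s) / ε ^ 2) = -(c2 * (t' - s)) := by
                rw [hc2]; field_simp; try ring
              rw [e1, e2]
              ring
      · exact (GB_integrable hα0 hα1 hc2p ht'0).const_mul _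
    have hb2' : (2 * N * (t - t') ^ α) * ((1/c2) ^ (1-α) * Real.Gamma (1-α))
        = 2 * Real.Gamma (1-α) * (2/μ) ^ (1-α) * E * N * (t - t') ^ α := by
      have e1 : (1/c2 : ℝ) = (2/μ) * ε ^ 2 := by rw [hc2]; field_simp; try ring
      rw [e1, Real.mul_rpow (by positivity) hε2.le, hε2E]
      ring
    calc ‖g t - g t'‖ ≤ ‖∫ s in (0:ℝ)..t',
            (S ((t - s) / ε ^ 2) (f s) - S ((t' - s) / ε ^ 2) (f s))‖
          + ‖∫ s in t'..t, S ((t - s) / ε ^ 2) (f s)‖ := by rw [e]; exact norm_add_le _ _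
      _ ≤ (2 * Real.Gamma (1-α) * (2/μ) ^ (1-α) * E * N * (t - t') ^ α)
          + ((μ ^ (1-α))⁻¹ * E * N * (t - t') ^ α) :=
            add_le_add (hb2.trans_eq hb2') (hb1.trans hb1')
      _ = Chol * E * N * (t - t') ^ α := by rw [hChol]; ring
  have hCEN : 0 ≤ Chol * E * N := mul_nonneg (mul_nonneg hChol0.le hE0.le) hN0
  have hsemi : holderSemi α T g ≤ Chol * E * N := by
    apply Real.iSup_le ?_ hCEN
    rintro ⟨⟨a, ha⟩, ⟨b, hb⟩⟩
    dsimp only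
    by_cases hab : a = b
    · rw [if_pos hab]; exact hCEN
    · rw [if_neg hab]
      have key : ∀ p q : ℝ, p ∈ Icc (0:ℝ) T → q ∈ Icc (0:ℝ) T → q < p →
          ‖g p - g q‖ / |p - q| ^ α ≤ Chol * E * N := by
        intro p q hp hq hqp
        have hd := hdiff q p hq.1 hqp hp.2
        rw [div_le_iff₀ (by
          apply Real.rpow_pos_of_pos
          rw [abs_pos]
          exact sub_ne_zero.mpr (ne_of_gt hqp))]
        rw [abs_of_pos (by linarith : (0:ℝ) < p - q)]
        exact hd
      rcases lt_or_gt_of_ne hab with h | h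
      · have hk := key b a hb ha h
        rw [norm_sub_rev, abs_sub_comm] at hk
        exact hk
      · exact key a b ha hb h
  have hsupb : supNorm T g ≤ Csup * E * N := by
    apply Real.iSup_le ?_ (mul_nonneg (mul_nonneg hCsup0.le hE0.le) hN0)
    rintro ⟨t, ht⟩
    exact hsup t ht
  show supNorm T g + holderSemi α T g ≤ (Csup + Chol) * E * N
  have hre : (Csup + Chol) * E * N = Csup * E * N + Chol * E * N := by ring
  rw [hre]
  exact add_le_add hsupb hsemi
end

section
/- Let L generate an analytic semigroup with ‖e^{tL}‖ ≤ M e^{-μt} (M ≥ 1, μ > 0) on a Hilbert space X. Then for any α ∈ (0,1), ε > 0, and any f ∈ C^α([0,T];X) with f(0) = 0, the convolution t ↦ ∫₀ᵗ e^{(t-s)L/ε²} f(s) ds satisfies ‖t ↦ ∫₀ᵗ e^{(t-s)L/ε²} f(s) ds‖_{C^α([0,T];X)} ≤ C ε² ‖f‖_{C^α([0,T];X)} for a constant C independent of ε and f. -/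
open MeasureTheory Set

/-- Integral of a decaying exponential is bounded by `1/k`. -/
lemma expInt_le {k a b : ℝ} (hk : 0 < k) (ha : 0 ≤ a) (hab : a ≤ b) :
    (∫ w in a..b, Real.exp (-(k * w))) ≤ 1 / k := by
  have hderiv : ∀ x ∈ uIcc a b,
      HasDerivAt (fun w => -(Real.exp (-(k * w)) / k)) (Real.exp (-(k * x))) x := by
    intro x _
    have h1 : HasDerivAt (fun w : ℝ => -(k * w)) (-k) x := by
      simpa using (hasDerivAt_id x).const_mul (-k)
    have h2 := (Real.hasDerivAt_exp (-(k * x))).comp x h1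
    have h4 := (h2.div_const k).neg
    rw [mul_neg, neg_div, neg_neg, mul_div_assoc, div_self hk.ne', mul_one] at h4
    exact h4
  have hint : IntervalIntegrable (fun w => Real.exp (-(k * w))) volume a b :=
    (Real.continuous_exp.comp (by continuity)).intervalIntegrable a b
  rw [intervalIntegral.integral_eq_sub_of_hasDerivAt hderiv hint]
  have h1 : Real.exp (-(k * a)) ≤ 1 := Real.exp_le_one_iff.mpr (by nlinarith)
  have h2 : 0 < Real.exp (-(k * b)) := Real.exp_pos _
  have heq : -(Real.exp (-(k * b)) / k) - -(Real.exp (-(k * a)) / k)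
      = (Real.exp (-(k * a)) - Real.exp (-(k * b))) / k := by ring
  rw [heq, div_le_div_iff₀ hk hk]
  nlinarith

/-- Key approximation lemma: if `g` vanishes off `P`, is `B`-Hölder on pairs of `P`-points, and
globally `K`-Hölder on `[a,b]`, and `P a` holds but `P b` fails, then `‖g a‖ ≤ B (b-a)^α`. -/
lemma down_lemma {X : Type*} [NormedAddCommGroup X] {α B K : ℝ} (hα : 0 < α) (hB : 0 ≤ B)
    (hK : 0 ≤ K) (g : ℝ → X) (P : ℝ → Prop) {a b : ℝ} (hab : a < b)
    (hPa : P a) (hPb : ¬ P b)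
    (hg0 : ∀ x ∈ Icc a b, ¬ P x → g x = 0)
    (hgood : ∀ x ∈ Icc a b, ∀ y ∈ Icc a b, P x → P y → ‖g x - g y‖ ≤ B * |x - y| ^ α)
    (hbdd : ∀ x ∈ Icc a b, ∀ y ∈ Icc a b, x ≠ y → ‖g x - g y‖ ≤ K * |x - y| ^ α) :
    ‖g a‖ ≤ B * (b - a) ^ α := by
  set E := {x | x ∈ Icc a b ∧ ¬ P x} with hE
  have hbE : b ∈ E := ⟨⟨hab.le, le_rfl⟩, hPb⟩
  have hEne : E.Nonempty := ⟨b, hbE⟩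
  have hEbdd : BddBelow E := ⟨a, fun x hx => hx.1.1⟩
  set q := sInf E with hq
  have haq : a ≤ q := le_csInf hEne fun x hx => hx.1.1
  have hqb : q ≤ b := csInf_le hEbdd hbE
  have hPlt : ∀ x, a ≤ x → x < q → P x := by
    intro x hax hxq
    by_contra hPx
    exact absurd (csInf_le hEbdd ⟨⟨hax, le_trans hxq.le hqb⟩, hPx⟩) (not_le.mpr hxq)
  apply _root_.le_of_forall_pos_le_add
  intro η hη
  have hden : 0 < (K + 1) * 2 ^ (α:ℝ) := by
    have := Real.rpow_pos_of_pos (by norm_num : (0:ℝ) < 2) α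
    nlinarith
  set δ := (η / ((K + 1) * 2 ^ (α:ℝ))) ^ (α⁻¹) with hδdef
  have hδ : 0 < δ := Real.rpow_pos_of_pos (div_pos hη hden) _
  set r := max (q - δ) a with hr
  have har : a ≤ r := le_max_right _ _
  have hrq : r ≤ q := max_le (by linarith) haq
  have hrb : r ≤ b := hrq.trans hqb
  have hPr : P r := by
    rcases le_or_gt (q - δ) a with h | h
    · rw [hr, max_eq_right h]; exact hPa
    · rw [hr, max_eq_left h.le]; exact hPlt _ h.le (by linarith)
  obtain ⟨r', hr'E, hr'lt⟩ : ∃ x ∈ E, x < q + δ :=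
    (csInf_lt_iff hEbdd hEne).mp (by linarith)
  have hqr' : q ≤ r' := csInf_le hEbdd hr'E
  have hgr' : g r' = 0 := hg0 _ hr'E.1 hr'E.2
  have hrne : r ≠ r' := by rintro rfl; exact hr'E.2 hPr
  have h1 : ‖g a - g r‖ ≤ B * (b - a) ^ α := by
    refine (hgood a ⟨le_rfl, hab.le⟩ r ⟨har, hrb⟩ hPa hPr).trans ?_
    have habs : |a - r| ≤ b - a := by
      rw [abs_sub_comm, abs_of_nonneg (by linarith)]; linarith
    exact mul_le_mul_of_nonneg_left (Real.rpow_le_rpow (abs_nonneg _) habs hα.le) hB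
  have hrge : q - δ ≤ r := le_max_left _ _
  have h2 : ‖g r - g r'‖ ≤ K * (2 * δ) ^ α := by
    refine (hbdd r ⟨har, hrb⟩ r' hr'E.1 hrne).trans ?_
    have habs : |r - r'| ≤ 2 * δ := by
      rw [abs_sub_comm, abs_of_nonneg (by linarith)]; linarith
    exact mul_le_mul_of_nonneg_left
      (Real.rpow_le_rpow (abs_nonneg _) habs hα.le) hK
  have h3 : K * (2 * δ) ^ α ≤ η := by
    have hδα : δ ^ α = η / ((K + 1) * 2 ^ (α:ℝ)) :=
      Real.rpow_inv_rpow (le_of_lt (div_pos hη hden)) hα.ne'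
    have h2p := Real.rpow_pos_of_pos (by norm_num : (0:ℝ) < 2) α
    have heq2 : (2:ℝ) ^ (α:ℝ) * (η / ((K + 1) * 2 ^ (α:ℝ))) = η / (K + 1) := by
      field_simp
    rw [Real.mul_rpow (by norm_num) hδ.le, hδα, heq2, ← mul_div_assoc,
      div_le_iff₀ (by linarith : (0:ℝ) < K + 1)]
    nlinarith
  have hga : g a = (g a - g r) + (g r - g r') := by rw [hgr']; abel
  calc ‖g a‖ = ‖(g a - g r) + (g r - g r')‖ := by rw [← hga]
    _ ≤ ‖g a - g r‖ + ‖g r - g r'‖ := norm_add_le _ _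
    _ ≤ B * (b - a) ^ α + η := add_le_add h1 (h2.trans h3)

/-- Mirror version of `down_lemma`. -/
lemma up_lemma {X : Type*} [NormedAddCommGroup X] {α B K : ℝ} (hα : 0 < α) (hB : 0 ≤ B)
    (hK : 0 ≤ K) (g : ℝ → X) (P : ℝ → Prop) {a b : ℝ} (hab : a < b)
    (hPa : ¬ P a) (hPb : P b)
    (hg0 : ∀ x ∈ Icc a b, ¬ P x → g x = 0)
    (hgood : ∀ x ∈ Icc a b, ∀ y ∈ Icc a b, P x → P y → ‖g x - g y‖ ≤ B * |x - y| ^ α)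
    (hbdd : ∀ x ∈ Icc a b, ∀ y ∈ Icc a b, x ≠ y → ‖g x - g y‖ ≤ K * |x - y| ^ α) :
    ‖g b‖ ≤ B * (b - a) ^ α := by
  have hmem : ∀ x ∈ Icc a b, a + b - x ∈ Icc a b := by
    intro x hx; exact ⟨by linarith [hx.2], by linarith [hx.1]⟩
  have habs : ∀ x y : ℝ, |(a + b - x) - (a + b - y)| = |x - y| := by
    intro x y
    rw [show (a + b - x) - (a + b - y) = y - x by ring, abs_sub_comm]
  have := down_lemma hα hB hK (fun z => g (a + b - z)) (fun z => P (a + b - z)) hab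
    (by simpa using hPb) (by simpa using hPa)
    (fun x hx hPx => hg0 _ (hmem x hx) hPx)
    (fun x hx y hy hPx hPy => by
      have h := hgood _ (hmem x hx) _ (hmem y hy) hPx hPy
      rwa [habs x y] at h)
    (fun x hx y hy hne => by
      have hne' : a + b - x ≠ a + b - y := fun h => hne (by linarith)
      have h := hbdd _ (hmem x hx) _ (hmem y hy) hne'
      rwa [habs x y] at h)
  simpa using this

/-- If `L` generates an analytic semigroup `S t = e^{tL}` on a Hilbert space
with `‖S t‖ ≤ M e^{-μ t}` (`M ≥ 1`, `μ > 0`), then for `α ∈ (0,1)` there is a constant `C`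
such that for all `ε > 0` and `f ∈ C^α([0,T];X)` with `f 0 = 0`,
`‖t ↦ ∫₀ᵗ e^{(t-s)L/ε²} f(s) ds‖_{C^α([0,T];X)} ≤ C ε² ‖f‖_{C^α([0,T];X)}`. -/
theorem stmt1 {X : Type*} [NormedAddCommGroup X] [InnerProductSpace ℝ X] [CompleteSpace X]
    (S : ℝ → X →L[ℝ] X) (M μ : ℝ) (hM : 1 ≤ M) (hμ : 0 < μ)
    (hS0 : S 0 = ContinuousLinearMap.id ℝ X)
    (hSadd : ∀ s t : ℝ, 0 ≤ s → 0 ≤ t → S (s + t) = (S s).comp (S t))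
    (hSbound : ∀ t : ℝ, 0 ≤ t → ‖S t‖ ≤ M * Real.exp (-μ * t))
    (T α : ℝ) (hT : 0 < T) (hα : α ∈ Ioo (0:ℝ) 1) :
    ∃ C > 0, ∀ ε : ℝ, 0 < ε → ∀ f : ℝ → X, ContinuousOn f (Icc 0 T) → f 0 = 0 →
      (∃ K : ℝ, ∀ s ∈ Icc (0:ℝ) T, ∀ t ∈ Icc (0:ℝ) T, ‖f t - f s‖ ≤ K * |t - s| ^ α) →
      holderNorm α T (fun t => ∫ s in (0:ℝ)..t, S ((t - s) / ε ^ 2) (f s)) ≤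
        C * ε ^ 2 * holderNorm α T f := by
  classical
  have hα0 : 0 < α := hα.1
  have hT0 : 0 ≤ T := hT.le
  have hM0 : 0 < M := lt_of_lt_of_le one_pos hM
  have hTα : 0 < T ^ (α:ℝ) := Real.rpow_pos_of_pos hT α
  refine ⟨M / μ * (T ^ (α:ℝ) + 2), mul_pos (div_pos hM0 hμ) (by positivity), ?_⟩
  intro ε hε f hfc hf0 hKex
  obtain ⟨K, hKf⟩ := hKex
  have hε2 : (0:ℝ) < ε ^ 2 := by positivity
  have hk : 0 < μ / ε ^ 2 := div_pos hμ hε2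
  have hne : Nonempty (Icc (0:ℝ) T) := ⟨⟨0, le_rfl, hT0⟩⟩
  set g : ℝ → X := fun t => ∫ s in (0:ℝ)..t, S ((t - s) / ε ^ 2) (f s) with hgdef
  set Hf := holderSemi α T f with hHfdef
  -- facts about f
  have hfam : ∀ p : Icc (0:ℝ) T × Icc (0:ℝ) T,
      (if (p.1 : ℝ) = (p.2 : ℝ) then 0
       else ‖f (p.1 : ℝ) - f (p.2 : ℝ)‖ / |(p.1 : ℝ) - (p.2 : ℝ)| ^ α) ≤ max K 0 := by
    intro p
    split_ifs with h
    · exact le_max_right _ _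
    · have hpos : 0 < |(p.1 : ℝ) - (p.2 : ℝ)| ^ (α:ℝ) :=
        Real.rpow_pos_of_pos (abs_pos.mpr (sub_ne_zero.mpr h)) _
      rw [div_le_iff₀ hpos]
      calc ‖f (p.1:ℝ) - f (p.2:ℝ)‖ ≤ K * |(p.1:ℝ) - (p.2:ℝ)| ^ (α:ℝ) :=
            hKf _ p.2.2 _ p.1.2
        _ ≤ max K 0 * |(p.1:ℝ) - (p.2:ℝ)| ^ (α:ℝ) :=
            mul_le_mul_of_nonneg_right (le_max_left _ _) hpos.le
  have hfbddA : BddAbove (Set.range fun p : Icc (0:ℝ) T × Icc (0:ℝ) T =>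
      (if (p.1 : ℝ) = (p.2 : ℝ) then 0
       else ‖f (p.1 : ℝ) - f (p.2 : ℝ)‖ / |(p.1 : ℝ) - (p.2 : ℝ)| ^ α)) :=
    ⟨max K 0, by rintro x ⟨p, rfl⟩; exact hfam p⟩
  have hHf0 : 0 ≤ Hf := by
    rw [hHfdef, holderSemi]
    refine Real.iSup_nonneg fun p => ?_
    split_ifs with h
    · exact le_rfl
    · positivity
  have hfH : ∀ s ∈ Icc (0:ℝ) T, ∀ t ∈ Icc (0:ℝ) T, ‖f t - f s‖ ≤ Hf * |t - s| ^ (α:ℝ) := by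
    intro s hs t ht
    by_cases h : t = s
    · subst h; simp [Real.zero_rpow hα0.ne']
    · have hpos : 0 < |t - s| ^ (α:ℝ) :=
        Real.rpow_pos_of_pos (abs_pos.mpr (sub_ne_zero.mpr h)) _
      have hle := le_ciSup hfbddA (⟨⟨t, ht⟩, ⟨s, hs⟩⟩ : Icc (0:ℝ) T × Icc (0:ℝ) T)
      rw [if_neg h] at hle
      rw [hHfdef, holderSemi]
      exact (div_le_iff₀ hpos).mp hle
  have hfb : ∀ t ∈ Icc (0:ℝ) T, ‖f t‖ ≤ Hf * T ^ (α:ℝ) := by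
    intro t ht
    have h := hfH 0 ⟨le_rfl, hT0⟩ t ht
    rw [hf0, sub_zero, sub_zero] at h
    refine h.trans ?_
    have h2 : |t| ^ (α:ℝ) ≤ T ^ (α:ℝ) :=
      Real.rpow_le_rpow (abs_nonneg _) (by rw [abs_of_nonneg ht.1]; exact ht.2) hα0.le
    exact mul_le_mul_of_nonneg_left h2 hHf0
  set P : ℝ → Prop :=
    fun t => IntervalIntegrable (fun s => S ((t - s) / ε ^ 2) (f s)) volume 0 t with hPdef
  have hgz : ∀ t, ¬ P t → g t = 0 := fun t h => intervalIntegral.integral_undef h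
  have hFt : ∀ t, P t → IntervalIntegrable (fun w => S (w / ε ^ 2) (f (t - w))) volume 0 t := by
    intro t ht
    have h2 := IntervalIntegrable.comp_sub_left ht t
    simp only [sub_zero, sub_self] at h2
    have heq : (fun x => S ((t - (t - x)) / ε ^ 2) (f (t - x)))
        = fun w => S (w / ε ^ 2) (f (t - w)) := by funext x; rw [sub_sub_cancel]
    rw [heq] at h2
    exact h2.symm
  have hgF : ∀ t : ℝ, g t = ∫ w in (0:ℝ)..t, S (w / ε ^ 2) (f (t - w)) := by
    intro t
    have heq : (fun s => S ((t - s) / ε ^ 2) (f s))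
        = fun s => (fun w => S (w / ε ^ 2) (f (t - w))) (t - s) := by
      funext s; simp [sub_sub_cancel]
    show (∫ s in (0:ℝ)..t, S ((t - s) / ε ^ 2) (f s)) = _
    rw [heq, intervalIntegral.integral_comp_sub_left (fun w => S (w / ε ^ 2) (f (t - w))) t]
    simp
  have key : ∀ (c a b : ℝ) (φ : ℝ → X), 0 ≤ c → 0 ≤ a → a ≤ b →
      IntervalIntegrable φ volume a b →
      (∀ w ∈ Icc a b, ‖φ w‖ ≤ M * c * Real.exp (-(μ / ε ^ 2 * w))) →
      ‖∫ w in a..b, φ w‖ ≤ M * c * (ε ^ 2 / μ) := by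
    intro c a b φ hc ha hab hφ hb
    have hMc : 0 ≤ M * c := mul_nonneg hM0.le hc
    calc ‖∫ w in a..b, φ w‖ ≤ ∫ w in a..b, ‖φ w‖ :=
          intervalIntegral.norm_integral_le_integral_norm hab
      _ ≤ ∫ w in a..b, M * c * Real.exp (-(μ / ε ^ 2 * w)) := by
          have hcont : Continuous fun w : ℝ => M * c * Real.exp (-(μ / ε ^ 2 * w)) :=
            continuous_const.mul
              (Real.continuous_exp.comp ((continuous_const.mul continuous_id).neg))
          exact intervalIntegral.integral_mono_on hab hφ.norm (hcont.intervalIntegrable a b) hb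
      _ = M * c * ∫ w in a..b, Real.exp (-(μ / ε ^ 2 * w)) := by
          rw [intervalIntegral.integral_const_mul]
      _ ≤ M * c * (1 / (μ / ε ^ 2)) :=
          mul_le_mul_of_nonneg_left (expInt_le hk ha hab) hMc
      _ = M * c * (ε ^ 2 / μ) := by rw [one_div_div]
  have hSb : ∀ w : ℝ, 0 ≤ w → ∀ x : X,
      ‖S (w / ε ^ 2) x‖ ≤ M * Real.exp (-(μ / ε ^ 2 * w)) * ‖x‖ := by
    intro w hw x
    have h1 := (S (w / ε ^ 2)).le_opNorm x
    have h2 := hSbound (w / ε ^ 2) (by positivity)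
    have heq : -μ * (w / ε ^ 2) = -(μ / ε ^ 2 * w) := by ring
    rw [heq] at h2
    calc ‖S (w / ε ^ 2) x‖ ≤ ‖S (w / ε ^ 2)‖ * ‖x‖ := h1
      _ ≤ M * Real.exp (-(μ / ε ^ 2 * w)) * ‖x‖ :=
          mul_le_mul_of_nonneg_right h2 (norm_nonneg _)
  have hcore : ∀ u v : ℝ, u ∈ Icc (0:ℝ) T → v ∈ Icc (0:ℝ) T → u ≤ v → P u → P v →
      ‖g v - g u‖ ≤ 2 * (M / μ) * Hf * ε ^ 2 * (v - u) ^ (α:ℝ) := by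
    intro u v hu hv huv hPu hPv
    have hu0 : 0 ≤ u := hu.1
    have hv0 : 0 ≤ v := hv.1
    have hvu0 : 0 ≤ v - u := sub_nonneg.mpr huv
    have hvuα : 0 ≤ (v - u) ^ (α:ℝ) := Real.rpow_nonneg hvu0 _
    have hFu := hFt u hPu
    have hFv := hFt v hPv
    have hFvu : IntervalIntegrable (fun w => S (w / ε ^ 2) (f (v - w))) volume 0 u :=
      hFv.mono_set (by rw [uIcc_of_le hu0, uIcc_of_le hv0]; exact Icc_subset_Icc le_rfl huv)
    have hFvuv : IntervalIntegrable (fun w => S (w / ε ^ 2) (f (v - w))) volume u v :=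
      hFv.mono_set (by rw [uIcc_of_le huv, uIcc_of_le hv0]; exact Icc_subset_Icc hu0 le_rfl)
    have hsplit : g v - g u =
        (∫ w in (0:ℝ)..u, (S (w / ε ^ 2) (f (v - w)) - S (w / ε ^ 2) (f (u - w)))) +
          ∫ w in u..v, S (w / ε ^ 2) (f (v - w)) := by
      rw [hgF u, hgF v, intervalIntegral.integral_sub hFvu hFu,
        ← intervalIntegral.integral_add_adjacent_intervals hFvu hFvuv]
      abel
    rw [hsplit]
    have hb1 : ‖∫ w in (0:ℝ)..u, (S (w / ε ^ 2) (f (v - w)) - S (w / ε ^ 2) (f (u - w)))‖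
        ≤ M * (Hf * (v - u) ^ (α:ℝ)) * (ε ^ 2 / μ) := by
      apply key _ _ _ _ (mul_nonneg hHf0 hvuα) le_rfl hu0 (hFvu.sub hFu)
      intro w hw
      rw [← map_sub]
      refine (hSb w hw.1 _).trans ?_
      have hmem1 : u - w ∈ Icc (0:ℝ) T := ⟨by linarith [hw.2], by linarith [hw.1, hu.2]⟩
      have hmem2 : v - w ∈ Icc (0:ℝ) T := ⟨by linarith [hw.2], by linarith [hw.1, hv.2]⟩
      have hf1 := hfH _ hmem1 _ hmem2
      rw [show v - w - (u - w) = v - u by ring, abs_of_nonneg hvu0] at hf1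
      calc M * Real.exp (-(μ / ε ^ 2 * w)) * ‖f (v - w) - f (u - w)‖
          ≤ M * Real.exp (-(μ / ε ^ 2 * w)) * (Hf * (v - u) ^ (α:ℝ)) :=
            mul_le_mul_of_nonneg_left hf1 (mul_nonneg hM0.le (Real.exp_pos _).le)
        _ = M * (Hf * (v - u) ^ (α:ℝ)) * Real.exp (-(μ / ε ^ 2 * w)) := by ring
    have hb2 : ‖∫ w in u..v, S (w / ε ^ 2) (f (v - w))‖
        ≤ M * (Hf * (v - u) ^ (α:ℝ)) * (ε ^ 2 / μ) := by
      apply key _ _ _ _ (mul_nonneg hHf0 hvuα) hu0 huv hFvuv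
      intro w hw
      refine (hSb w (le_trans hu0 hw.1) _).trans ?_
      have hmem2 : v - w ∈ Icc (0:ℝ) T :=
        ⟨by linarith [hw.2], by linarith [hw.1, hv.2, hu0]⟩
      have hf1 := hfH 0 ⟨le_rfl, hT0⟩ _ hmem2
      rw [hf0, sub_zero, sub_zero] at hf1
      have hf2 : ‖f (v - w)‖ ≤ Hf * (v - u) ^ (α:ℝ) := by
        refine hf1.trans ?_
        refine mul_le_mul_of_nonneg_left ?_ hHf0
        refine Real.rpow_le_rpow (abs_nonneg _) ?_ hα0.le
        rw [abs_of_nonneg (by linarith [hw.2] : (0:ℝ) ≤ v - w)]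
        linarith [hw.1]
      calc M * Real.exp (-(μ / ε ^ 2 * w)) * ‖f (v - w)‖
          ≤ M * Real.exp (-(μ / ε ^ 2 * w)) * (Hf * (v - u) ^ (α:ℝ)) :=
            mul_le_mul_of_nonneg_left hf2 (mul_nonneg hM0.le (Real.exp_pos _).le)
        _ = M * (Hf * (v - u) ^ (α:ℝ)) * Real.exp (-(μ / ε ^ 2 * w)) := by ring
    calc ‖(∫ w in (0:ℝ)..u, (S (w / ε ^ 2) (f (v - w)) - S (w / ε ^ 2) (f (u - w)))) +
            ∫ w in u..v, S (w / ε ^ 2) (f (v - w))‖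
        ≤ ‖∫ w in (0:ℝ)..u, (S (w / ε ^ 2) (f (v - w)) - S (w / ε ^ 2) (f (u - w)))‖ +
            ‖∫ w in u..v, S (w / ε ^ 2) (f (v - w))‖ := norm_add_le _ _
      _ ≤ M * (Hf * (v - u) ^ (α:ℝ)) * (ε ^ 2 / μ) +
            M * (Hf * (v - u) ^ (α:ℝ)) * (ε ^ 2 / μ) := add_le_add hb1 hb2
      _ = 2 * (M / μ) * Hf * ε ^ 2 * (v - u) ^ (α:ℝ) := by field_simp; ring
  -- sup norm bound
  have hsupb : 0 ≤ M / μ * T ^ (α:ℝ) * ε ^ 2 * Hf :=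
    mul_nonneg (mul_nonneg (mul_nonneg (div_pos hM0 hμ).le hTα.le) hε2.le) hHf0
  have hsup : supNorm T g ≤ M / μ * T ^ (α:ℝ) * ε ^ 2 * Hf := by
    rw [supNorm]
    refine Real.iSup_le (fun t => ?_) hsupb
    by_cases hPt : P (t : ℝ)
    · rw [hgF]
      have hkey := key (Hf * T ^ (α:ℝ)) 0 (t : ℝ) _ (mul_nonneg hHf0 hTα.le) le_rfl t.2.1
        (hFt _ hPt) ?_
      · refine hkey.trans (le_of_eq ?_)
        field_simp
      · intro w hw
        refine (hSb w hw.1 _).trans ?_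
        have hmem : (t:ℝ) - w ∈ Icc (0:ℝ) T := ⟨by linarith [hw.2], by linarith [hw.1, t.2.2]⟩
        calc M * Real.exp (-(μ / ε ^ 2 * w)) * ‖f ((t:ℝ) - w)‖
            ≤ M * Real.exp (-(μ / ε ^ 2 * w)) * (Hf * T ^ (α:ℝ)) :=
              mul_le_mul_of_nonneg_left (hfb _ hmem) (mul_nonneg hM0.le (Real.exp_pos _).le)
          _ = M * (Hf * T ^ (α:ℝ)) * Real.exp (-(μ / ε ^ 2 * w)) := by ring
    · rw [hgz _ hPt]
      simpa using hsupb
  -- Hölder seminorm bound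
  have hBnn' : 0 ≤ 2 * (M / μ) * Hf * ε ^ 2 :=
    mul_nonneg (mul_nonneg (mul_nonneg (by norm_num) (div_pos hM0 hμ).le) hHf0) hε2.le
  have hsemi : holderSemi α T g ≤ 2 * (M / μ) * Hf * ε ^ 2 := by
    by_cases hbddg : BddAbove (Set.range fun p : Icc (0:ℝ) T × Icc (0:ℝ) T =>
        if (p.1 : ℝ) = (p.2 : ℝ) then 0
        else ‖g (p.1 : ℝ) - g (p.2 : ℝ)‖ / |(p.1 : ℝ) - (p.2 : ℝ)| ^ α)
    · obtain ⟨K₀, hK₀⟩ := hbddg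
      have hK₀mem : ∀ p : Icc (0:ℝ) T × Icc (0:ℝ) T,
          (if (p.1 : ℝ) = (p.2 : ℝ) then 0
           else ‖g (p.1 : ℝ) - g (p.2 : ℝ)‖ / |(p.1 : ℝ) - (p.2 : ℝ)| ^ α) ≤ K₀ :=
        fun p => hK₀ (Set.mem_range_self p)
      have hK₀0 : 0 ≤ K₀ := by
        have h := hK₀mem ⟨⟨0, le_rfl, hT0⟩, ⟨0, le_rfl, hT0⟩⟩
        simpa using h
      have hgK : ∀ x ∈ Icc (0:ℝ) T, ∀ y ∈ Icc (0:ℝ) T, x ≠ y →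
          ‖g x - g y‖ ≤ K₀ * |x - y| ^ (α:ℝ) := by
        intro x hx y hy hxy
        have h := hK₀mem ⟨⟨x, hx⟩, ⟨y, hy⟩⟩
        rw [if_neg hxy] at h
        have hpos : 0 < |x - y| ^ (α:ℝ) :=
          Real.rpow_pos_of_pos (abs_pos.mpr (sub_ne_zero.mpr hxy)) _
        exact (div_le_iff₀ hpos).mp h
      have hgood : ∀ x ∈ Icc (0:ℝ) T, ∀ y ∈ Icc (0:ℝ) T, P x → P y →
          ‖g x - g y‖ ≤ 2 * (M / μ) * Hf * ε ^ 2 * |x - y| ^ (α:ℝ) := by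
        intro x hx y hy hPx hPy
        rcases le_total x y with h | h
        · rw [norm_sub_rev, abs_sub_comm, abs_of_nonneg (sub_nonneg.mpr h)]
          exact hcore x y hx hy h hPx hPy
        · rw [abs_of_nonneg (sub_nonneg.mpr h)]
          exact hcore y x hy hx h hPy hPx
      have main : ∀ x ∈ Icc (0:ℝ) T, ∀ y ∈ Icc (0:ℝ) T, x < y →
          ‖g x - g y‖ ≤ 2 * (M / μ) * Hf * ε ^ 2 * |x - y| ^ (α:ℝ) := by
        intro x hx y hy hxy
        have hIcc : Icc x y ⊆ Icc (0:ℝ) T := Icc_subset_Icc hx.1 hy.2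
        have habs : |x - y| = y - x := by
          rw [abs_sub_comm, abs_of_nonneg (by linarith)]
        by_cases hPx : P x <;> by_cases hPy : P y
        · rw [norm_sub_rev, habs]
          exact hcore x y hx hy hxy.le hPx hPy
        · have hd := down_lemma hα0 hBnn' hK₀0 g P hxy hPx hPy
            (fun z _ hPz => hgz z hPz)
            (fun z hz w hw hPz hPw => hgood z (hIcc hz) w (hIcc hw) hPz hPw)
            (fun z hz w hw hzw => hgK z (hIcc hz) w (hIcc hw) hzw)
          rw [hgz y hPy, habs]
          simpa using hd
        · have hd := up_lemma hα0 hBnn' hK₀0 g P hxy hPx hPy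
            (fun z _ hPz => hgz z hPz)
            (fun z hz w hw hPz hPw => hgood z (hIcc hz) w (hIcc hw) hPz hPw)
            (fun z hz w hw hzw => hgK z (hIcc hz) w (hIcc hw) hzw)
          rw [hgz x hPx, habs]
          simpa using hd
        · rw [hgz x hPx, hgz y hPy]
          simpa using mul_nonneg hBnn' (Real.rpow_nonneg (abs_nonneg (x - y)) (α:ℝ))
      rw [holderSemi]
      refine Real.iSup_le (fun p => ?_) hBnn'
      split_ifs with h
      · exact hBnn'
      · have hpos : 0 < |(p.1:ℝ) - (p.2:ℝ)| ^ (α:ℝ) :=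
          Real.rpow_pos_of_pos (abs_pos.mpr (sub_ne_zero.mpr h)) _
        rw [div_le_iff₀ hpos]
        rcases lt_or_gt_of_ne h with hlt | hgt
        · exact main _ p.1.2 _ p.2.2 hlt
        · have h2 := main _ p.2.2 _ p.1.2 hgt
          rw [norm_sub_rev, abs_sub_comm] at h2
          exact h2
    · rw [holderSemi, Real.iSup_of_not_bddAbove hbddg]
      exact hBnn'
  -- conclusion
  have hsupf : 0 ≤ supNorm T f := by
    rw [supNorm]; exact Real.iSup_nonneg fun t => norm_nonneg _
  rw [holderNorm, holderNorm, ← hHfdef]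
  have e : M / μ * (T ^ (α:ℝ) + 2) * ε ^ 2 * (supNorm T f + Hf)
      = M / μ * T ^ (α:ℝ) * ε ^ 2 * Hf + 2 * (M / μ) * Hf * ε ^ 2 +
        M / μ * (T ^ (α:ℝ) + 2) * ε ^ 2 * supNorm T f := by ring
  rw [e]
  have hlast : 0 ≤ M / μ * (T ^ (α:ℝ) + 2) * ε ^ 2 * supNorm T f :=
    mul_nonneg (mul_nonneg (mul_nonneg (div_pos hM0 hμ).le (by positivity)) hε2.le) hsupf
  linarith [hsup, hsemi]
end

section
/- For H ∈ (0,1) and α ∈ (0,H), and any λ > 0, one has the bound ∫₀ᵗ ∫₀ᵗ u^{−α} v^{−α} e^{−λu} e^{−λv} |u−v|^{2H−2} du dv ≤ 2 B(1−α, 2H−1) ∫₀^∞ v^{2(H−α)−1} e^{−λv} dv for all t > 0, where B denotes the Beta function; in particular the left-hand side is bounded uniformly in t. -/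
open MeasureTheory Set
open scoped ENNReal

/-- Euler's Beta function `B(a,b) = ∫₀¹ w^{a−1}(1−w)^{b−1} dw`. -/
noncomputable def betaFn (a b : ℝ) : ℝ :=
  ∫ w in (0:ℝ)..1, w ^ (a - 1) * (1 - w) ^ (b - 1)



-- Aux 1: beta-type integrand is interval integrable on [0,1]
lemma aux_betaIntegrable {p c : ℝ} (hp : -1 < p) (hc : -1 < c) :
    IntervalIntegrable (fun w : ℝ => w ^ p * (1 - w) ^ c) volume 0 1 := by
  have h1 : IntervalIntegrable (fun w : ℝ => w ^ p) volume 0 (1/2) :=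
    intervalIntegral.intervalIntegrable_rpow' hp
  have hcont1 : ContinuousOn (fun w : ℝ => (1 - w) ^ c) (uIcc (0:ℝ) (1/2)) := by
    apply ContinuousOn.rpow_const (by fun_prop)
    intro x hx
    rw [uIcc_of_le (by norm_num)] at hx
    left
    have := hx.2
    intro h
    nlinarith [hx.1, hx.2]
  have I1 : IntervalIntegrable (fun w : ℝ => w ^ p * (1 - w) ^ c) volume 0 (1/2) :=
    h1.mul_continuousOn hcont1
  have h2 : IntervalIntegrable (fun w : ℝ => (1 - w) ^ c) volume (1/2) 1 := by
    have := ((intervalIntegral.intervalIntegrable_rpow' (a := 0) (b := 1/2) hc).comp_sub_left 1).symm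
    norm_num at this
    exact this
  have hcont2 : ContinuousOn (fun w : ℝ => w ^ p) (uIcc (1/2:ℝ) 1) := by
    apply ContinuousOn.rpow_const (by fun_prop)
    intro x hx
    rw [uIcc_of_le (by norm_num)] at hx
    left; nlinarith [hx.1]
  have I2 : IntervalIntegrable (fun w : ℝ => w ^ p * (1 - w) ^ c) volume (1/2) 1 :=
    h2.continuousOn_mul hcont2
  exact I1.trans I2

lemma aux_keyEq {p c : ℝ} {v : ℝ} (hv : 0 < v) (w : ℝ) (hw : w ∈ uIcc (0:ℝ) 1) :
    (v * w) ^ p * (v - v * w) ^ c = v ^ (p + c) * (w ^ p * (1 - w) ^ c) := by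
  rw [uIcc_of_le (by norm_num)] at hw
  have h0 : (0:ℝ) ≤ w := hw.1
  have h1 : (0:ℝ) ≤ 1 - w := by linarith [hw.2]
  rw [Real.mul_rpow hv.le h0, show v - v * w = v * (1 - w) by ring,
    Real.mul_rpow hv.le h1, Real.rpow_add hv]
  ring

lemma aux_scaleIntegrable {p c : ℝ} (hp : -1 < p) (hc : -1 < c)
    {v : ℝ} (hv : 0 < v) :
    IntervalIntegrable (fun u : ℝ => u ^ p * (v - u) ^ c) volume 0 v := by
  have hb : IntervalIntegrable (fun w : ℝ => w ^ p * (1 - w) ^ c) volume 0 1 :=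
    aux_betaIntegrable hp hc
  have h2 : IntervalIntegrable (fun w : ℝ => v ^ (p + c) * (w ^ p * (1 - w) ^ c)) volume 0 1 :=
    hb.const_mul _
  have h3 : IntervalIntegrable (fun w : ℝ => (v * w) ^ p * (v - v * w) ^ c) volume 0 1 := by
    rw [intervalIntegrable_iff_integrableOn_Ioc_of_le (by norm_num)] at h2 ⊢
    refine h2.congr_fun (fun w hw => ?_) measurableSet_Ioc
    exact (aux_keyEq hv w (by rw [uIcc_of_le (by norm_num)]; exact Ioc_subset_Icc_self hw)).symm
  have h4 := h3.comp_mul_left (c := v⁻¹)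
  simpa [mul_inv_cancel_left₀ hv.ne', one_div, inv_inv] using h4

lemma aux_scaleVal {p c : ℝ} {v : ℝ} (hv : 0 < v) :
    (∫ u in (0:ℝ)..v, u ^ p * (v - u) ^ c)
      = v ^ (p + c + 1) * ∫ w in (0:ℝ)..1, w ^ p * (1 - w) ^ c := by
  have h := intervalIntegral.smul_integral_comp_mul_left
    (f := fun u : ℝ => u ^ p * (v - u) ^ c) (a := 0) (b := 1) v
  rw [mul_zero, mul_one] at h
  rw [← h, intervalIntegral.integral_congr
    (g := fun w : ℝ => v ^ (p + c) * (w ^ p * (1 - w) ^ c)) (fun w hw => aux_keyEq hv w hw),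
    intervalIntegral.integral_const_mul, smul_eq_mul,
    show p + c + 1 = 1 + (p + c) by ring, Real.rpow_add hv 1 (p + c), Real.rpow_one]
  ring

lemma aux_gammaIntegrable {q lam : ℝ} (hq : -1 < q) (hlam : 0 < lam) :
    IntegrableOn (fun v : ℝ => v ^ q * Real.exp (-lam * v)) (Ioi (0:ℝ)) := by
  have h := integrableOn_rpow_mul_exp_neg_mul_rpow hq zero_lt_one hlam
  refine h.congr_fun (fun x _ => ?_) measurableSet_Ioi
  simp only [Real.rpow_one]

/-- For `H ∈ (0,1)` with `H > ½` (so that `2H−2 > −1`) and `α ∈ (0,H)`,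
and any `λ > 0`,
`∫₀ᵗ ∫₀ᵗ u^{−α} v^{−α} e^{−λu} e^{−λv} |u−v|^{2H−2} du dv
  ≤ 2 B(1−α, 2H−1) ∫₀^∞ v^{2(H−α)−1} e^{−λv} dv`
for all `t > 0`; in particular the left-hand side is bounded uniformly in `t`. -/
theorem stmt11 (H α lam : ℝ) (hH : H ∈ Set.Ioo (0:ℝ) 1) (hH2 : 1 / 2 < H)
    (hα : α ∈ Set.Ioo (0:ℝ) H) (hlam : 0 < lam) (t : ℝ) (ht : 0 < t) :
    (∫ u in (0:ℝ)..t, ∫ v in (0:ℝ)..t,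
        u ^ (-α) * v ^ (-α) * Real.exp (-lam * u) * Real.exp (-lam * v) *
          |u - v| ^ (2 * H - 2)) ≤
      2 * betaFn (1 - α) (2 * H - 1) *
        ∫ v in Set.Ioi (0:ℝ), v ^ (2 * (H - α) - 1) * Real.exp (-lam * v) := by
  obtain ⟨hH0, hH1⟩ := hH
  obtain ⟨hα0, hαH⟩ := hα
  have hα1 : α < 1 := hαH.trans hH1
  have hpa : (-1:ℝ) < -α := by linarith
  have hcc : (-1:ℝ) < 2 * H - 2 := by linarith
  have hccne : 2 * H - 2 ≠ 0 := by intro h; nlinarith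
  have hq : (-1:ℝ) < 2 * (H - α) - 1 := by linarith
  set J := ∫ v in Set.Ioi (0:ℝ), v ^ (2 * (H - α) - 1) * Real.exp (-lam * v) with hJ
  set g : ℝ → ℝ → ℝ := fun u v =>
    u ^ (-α) * v ^ (-α) * Real.exp (-lam * u) * Real.exp (-lam * v) * |u - v| ^ (2 * H - 2)
    with hgdef
  -- Beta function value
  set Bint := ∫ w in (0:ℝ)..1, w ^ (-α) * (1 - w) ^ (2 * H - 2) with hBint
  have hBeq : betaFn (1 - α) (2 * H - 1) = Bint := by
    have e1 : 1 - α - 1 = -α := by ring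
    have e2 : 2 * H - 1 - 1 = 2 * H - 2 := by ring
    rw [betaFn, e1, e2]
  have hBnn : 0 ≤ Bint := by
    refine intervalIntegral.integral_nonneg (by norm_num) (fun w hw => ?_)
    exact mul_nonneg (Real.rpow_nonneg hw.1 _) (Real.rpow_nonneg (by linarith [hw.2]) _)
  have hJnn : 0 ≤ J := by
    refine setIntegral_nonneg measurableSet_Ioi (fun v hv => ?_)
    exact mul_nonneg (Real.rpow_nonneg (le_of_lt hv) _) (Real.exp_nonneg _)
  have hJint : IntegrableOn (fun v : ℝ => v ^ (2 * (H - α) - 1) * Real.exp (-lam * v))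
      (Set.Ioi (0:ℝ)) := aux_gammaIntegrable hq hlam
  -- nonnegativity of g
  have hgnn : ∀ u v : ℝ, 0 ≤ u → 0 ≤ v → 0 ≤ g u v := fun u v hu hv =>
    mul_nonneg (mul_nonneg (mul_nonneg (mul_nonneg (Real.rpow_nonneg hu _)
      (Real.rpow_nonneg hv _)) (Real.exp_nonneg _)) (Real.exp_nonneg _))
      (Real.rpow_nonneg (abs_nonneg _) _)
  have hsym : ∀ u v : ℝ, g v u = g u v := fun u v => by
    simp only [hgdef]; rw [abs_sub_comm]; ring
  -- measurability
  have hgm : Measurable (fun p : ℝ × ℝ => g p.1 p.2) := by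
    simp only [hgdef]
    fun_prop
  have hGm : Measurable (fun p : ℝ × ℝ => ENNReal.ofReal (g p.1 p.2)) :=
    ENNReal.measurable_ofReal.comp hgm
  -- measures and sets
  set μ : Measure ℝ := volume.restrict (Set.Ioo 0 t) with hμdef
  have hIoc : volume.restrict (Set.Ioc (0:ℝ) t) = μ :=
    (Measure.restrict_congr_set Ioo_ae_eq_Ioc).symm
  set π : Measure (ℝ × ℝ) := (volume : Measure ℝ).prod volume with hπdef
  set S : Set (ℝ × ℝ) := (Set.Ioo 0 t) ×ˢ (Set.Ioo 0 t) with hSdef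
  have hSm : MeasurableSet S := measurableSet_Ioo.prod measurableSet_Ioo
  set T : Set (ℝ × ℝ) := S ∩ {p | p.1 < p.2} with hTdef
  set T' : Set (ℝ × ℝ) := S ∩ {p | p.2 < p.1} with hT'def
  set D : Set (ℝ × ℝ) := S ∩ {p | p.1 = p.2} with hDdef
  have hTm : MeasurableSet T := hSm.inter (measurableSet_lt measurable_fst measurable_snd)
  have hT'm : MeasurableSet T' := hSm.inter (measurableSet_lt measurable_snd measurable_fst)
  have hDm : MeasurableSet D := hSm.inter (measurableSet_eq_fun measurable_fst measurable_snd)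
  set I := ∫⁻ p in S, ENNReal.ofReal (g p.1 p.2) ∂π with hIdef
  -- diagonal contributes zero
  have hDzero : (∫⁻ p in D, ENNReal.ofReal (g p.1 p.2) ∂π) = 0 := by
    have h0 : (∫⁻ p in D, ENNReal.ofReal (g p.1 p.2) ∂π)
        = ∫⁻ _p in D, (0:ℝ≥0∞) ∂π := by
      refine setLIntegral_congr_fun hDm (fun p hp => ?_)
      have hpe : p.1 = p.2 := hp.2
      simp only [hgdef, hpe, sub_self, abs_zero, Real.zero_rpow hccne, mul_zero,
        ENNReal.ofReal_zero]
    rw [h0, lintegral_zero]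
  -- swap symmetry
  have hswap : (∫⁻ p in T', ENNReal.ofReal (g p.1 p.2) ∂π)
      = ∫⁻ p in T, ENNReal.ofReal (g p.1 p.2) ∂π := by
    have hmp : MeasurePreserving (Prod.swap : ℝ × ℝ → ℝ × ℝ) π π :=
      Measure.measurePreserving_swap
    have h := hmp.setLIntegral_comp_preimage_emb
      MeasurableEquiv.prodComm.measurableEmbedding
      (fun p : ℝ × ℝ => ENNReal.ofReal (g p.1 p.2)) T'
    have hpre : (Prod.swap : ℝ × ℝ → ℝ × ℝ) ⁻¹' T' = T := by
      ext p
      simp only [hT'def, hTdef, hSdef, Set.mem_preimage, Set.mem_inter_iff, Set.mem_prod,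
        Set.mem_setOf_eq, Prod.fst_swap, Prod.snd_swap, Prod.swap_prod_mk]
      tauto
    rw [hpre] at h
    rw [← h]
    refine lintegral_congr (fun p => ?_)
    simp only [Prod.fst_swap, Prod.snd_swap, hsym]
  -- Fubini on the triangle
  have hTr : (∫⁻ p in T, ENNReal.ofReal (g p.1 p.2) ∂π)
      = ∫⁻ v in Set.Ioo (0:ℝ) t, ∫⁻ u in Set.Ioo (0:ℝ) v, ENNReal.ofReal (g u v) := by
    rw [← lintegral_indicator hTm, hπdef,
      lintegral_prod_symm _ ((hGm.indicator hTm).aemeasurable)]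
    rw [← lintegral_indicator (measurableSet_Ioo (a := (0:ℝ)) (b := t))]
    refine lintegral_congr (fun v => ?_)
    by_cases hv : v ∈ Set.Ioo (0:ℝ) t
    · rw [Set.indicator_of_mem hv, ← lintegral_indicator (measurableSet_Ioo (a := (0:ℝ)) (b := v))]
      refine lintegral_congr (fun u => ?_)
      by_cases hu : u ∈ Set.Ioo (0:ℝ) v
      · rw [Set.indicator_of_mem hu, Set.indicator_of_mem]
        exact ⟨⟨⟨hu.1, hu.2.trans hv.2⟩, hv⟩, hu.2⟩
      · rw [Set.indicator_of_notMem hu, Set.indicator_of_notMem]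
        intro h
        exact hu ⟨h.1.1.1, h.2⟩
    · rw [Set.indicator_of_notMem hv]
      have : ∀ u : ℝ, T.indicator (fun p : ℝ × ℝ => ENNReal.ofReal (g p.1 p.2)) (u, v) = 0 :=
        fun u => Set.indicator_of_notMem (fun h => hv h.1.2) _
      simp only [this, lintegral_zero]
  -- inner bound
  have hInner : ∀ v ∈ Set.Ioo (0:ℝ) t,
      (∫⁻ u in Set.Ioo (0:ℝ) v, ENNReal.ofReal (g u v))
        ≤ ENNReal.ofReal (Bint * (v ^ (2 * (H - α) - 1) * Real.exp (-lam * v))) := by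
    intro v hv
    have hv0 : (0:ℝ) < v := hv.1
    have hfint : IntegrableOn (fun u : ℝ => u ^ (-α) * (v - u) ^ (2 * H - 2))
        (Set.Ioo 0 v) := by
      have := aux_scaleIntegrable hpa hcc hv0
      rw [intervalIntegrable_iff_integrableOn_Ioc_of_le hv0.le] at this
      exact this.mono_set Set.Ioo_subset_Ioc_self
    have hfnn : 0 ≤ᵐ[volume.restrict (Set.Ioo 0 v)]
        fun u : ℝ => u ^ (-α) * (v - u) ^ (2 * H - 2) := by
      refine (ae_restrict_iff' measurableSet_Ioo).2 (ae_of_all _ (fun u hu => ?_))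
      exact mul_nonneg (Real.rpow_nonneg hu.1.le _) (Real.rpow_nonneg (by linarith [hu.2]) _)
    have hval : (∫ u in Set.Ioo (0:ℝ) v, u ^ (-α) * (v - u) ^ (2 * H - 2))
        = v ^ ((-α) + (2 * H - 2) + 1) * Bint := by
      rw [Measure.restrict_congr_set Ioo_ae_eq_Ioc,
        ← intervalIntegral.integral_of_le hv0.le, aux_scaleVal hv0]
    calc (∫⁻ u in Set.Ioo (0:ℝ) v, ENNReal.ofReal (g u v))
        ≤ ∫⁻ u in Set.Ioo (0:ℝ) v, ENNReal.ofReal ((v ^ (-α) * Real.exp (-lam * v)) *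
            (u ^ (-α) * (v - u) ^ (2 * H - 2))) := by
          refine setLIntegral_mono (by fun_prop) (fun u hu => ?_)
          refine ENNReal.ofReal_le_ofReal ?_
          have habs : |u - v| = v - u := by
            rw [abs_sub_comm]; exact abs_of_pos (by linarith [hu.2])
          have hexp : Real.exp (-lam * u) ≤ 1 := by
            rw [Real.exp_le_one_iff]
            nlinarith [mul_pos hlam hu.1]
          simp only [hgdef, habs]
          have h1 : u ^ (-α) * v ^ (-α) * Real.exp (-lam * u) * Real.exp (-lam * v) *
              (v - u) ^ (2 * H - 2) ≤ u ^ (-α) * v ^ (-α) * 1 * Real.exp (-lam * v) *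
              (v - u) ^ (2 * H - 2) := by
            refine mul_le_mul_of_nonneg_right (mul_le_mul_of_nonneg_right
              (mul_le_mul_of_nonneg_left hexp ?_) (Real.exp_nonneg _))
              (Real.rpow_nonneg (by linarith [hu.2]) _)
            exact mul_nonneg (Real.rpow_nonneg hu.1.le _) (Real.rpow_nonneg hv0.le _)
          calc u ^ (-α) * v ^ (-α) * Real.exp (-lam * u) * Real.exp (-lam * v) *
              (v - u) ^ (2 * H - 2) ≤ u ^ (-α) * v ^ (-α) * 1 * Real.exp (-lam * v) *
              (v - u) ^ (2 * H - 2) := h1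
            _ = (v ^ (-α) * Real.exp (-lam * v)) * (u ^ (-α) * (v - u) ^ (2 * H - 2)) := by ring
      _ = ∫⁻ u in Set.Ioo (0:ℝ) v, ENNReal.ofReal (v ^ (-α) * Real.exp (-lam * v)) *
            ENNReal.ofReal (u ^ (-α) * (v - u) ^ (2 * H - 2)) := by
          refine lintegral_congr (fun u => ?_)
          rw [ENNReal.ofReal_mul (mul_nonneg (Real.rpow_nonneg hv0.le _) (Real.exp_nonneg _))]
      _ = ENNReal.ofReal (v ^ (-α) * Real.exp (-lam * v)) *
            ∫⁻ u in Set.Ioo (0:ℝ) v, ENNReal.ofReal (u ^ (-α) * (v - u) ^ (2 * H - 2)) :=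
          lintegral_const_mul' _ _ ENNReal.ofReal_ne_top
      _ = ENNReal.ofReal (v ^ (-α) * Real.exp (-lam * v)) *
            ENNReal.ofReal (v ^ ((-α) + (2 * H - 2) + 1) * Bint) := by
          rw [← ofReal_integral_eq_lintegral_ofReal hfint hfnn, hval]
      _ = ENNReal.ofReal (Bint * (v ^ (2 * (H - α) - 1) * Real.exp (-lam * v))) := by
          rw [← ENNReal.ofReal_mul (mul_nonneg (Real.rpow_nonneg hv0.le _) (Real.exp_nonneg _))]
          congr 1
          have hx : v ^ (-α) * v ^ ((-α) + (2 * H - 2) + 1) = v ^ (2 * (H - α) - 1) := by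
            rw [← Real.rpow_add hv0]
            congr 1
            ring
          calc (v ^ (-α) * Real.exp (-lam * v)) * (v ^ ((-α) + (2 * H - 2) + 1) * Bint)
              = (v ^ (-α) * v ^ ((-α) + (2 * H - 2) + 1)) * Real.exp (-lam * v) * Bint := by ring
            _ = Bint * (v ^ (2 * (H - α) - 1) * Real.exp (-lam * v)) := by rw [hx]; ring
  -- bound for the triangle integral
  have hTbound : (∫⁻ p in T, ENNReal.ofReal (g p.1 p.2) ∂π)
      ≤ ENNReal.ofReal (Bint * J) := by
    rw [hTr]
    calc (∫⁻ v in Set.Ioo (0:ℝ) t, ∫⁻ u in Set.Ioo (0:ℝ) v, ENNReal.ofReal (g u v))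
        ≤ ∫⁻ v in Set.Ioo (0:ℝ) t,
            ENNReal.ofReal (Bint * (v ^ (2 * (H - α) - 1) * Real.exp (-lam * v))) :=
          setLIntegral_mono (by fun_prop) hInner
      _ ≤ ∫⁻ v in Set.Ioi (0:ℝ),
            ENNReal.ofReal (Bint * (v ^ (2 * (H - α) - 1) * Real.exp (-lam * v))) :=
          lintegral_mono_set Set.Ioo_subset_Ioi_self
      _ = ∫⁻ v in Set.Ioi (0:ℝ), ENNReal.ofReal Bint *
            ENNReal.ofReal (v ^ (2 * (H - α) - 1) * Real.exp (-lam * v)) := by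
          refine lintegral_congr (fun v => ?_)
          rw [ENNReal.ofReal_mul hBnn]
      _ = ENNReal.ofReal Bint *
            ∫⁻ v in Set.Ioi (0:ℝ), ENNReal.ofReal (v ^ (2 * (H - α) - 1) * Real.exp (-lam * v)) :=
          lintegral_const_mul' _ _ ENNReal.ofReal_ne_top
      _ = ENNReal.ofReal Bint * ENNReal.ofReal J := by
          rw [← ofReal_integral_eq_lintegral_ofReal hJint]
          refine (ae_restrict_iff' measurableSet_Ioi).2 (ae_of_all _ (fun v hv => ?_))
          exact mul_nonneg (Real.rpow_nonneg (le_of_lt hv) _) (Real.exp_nonneg _)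
      _ = ENNReal.ofReal (Bint * J) := (ENNReal.ofReal_mul hBnn).symm
  -- total bound
  have hIbound : I ≤ ENNReal.ofReal (2 * (Bint * J)) := by
    have hsub : S ⊆ (T ∪ T') ∪ D := by
      intro p hp
      rcases lt_trichotomy p.1 p.2 with h | h | h
      · exact Or.inl (Or.inl ⟨hp, h⟩)
      · exact Or.inr ⟨hp, h⟩
      · exact Or.inl (Or.inr ⟨hp, h⟩)
    calc I ≤ ∫⁻ p in (T ∪ T') ∪ D, ENNReal.ofReal (g p.1 p.2) ∂π :=
          lintegral_mono_set hsub
      _ ≤ (∫⁻ p in T ∪ T', ENNReal.ofReal (g p.1 p.2) ∂π)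
            + ∫⁻ p in D, ENNReal.ofReal (g p.1 p.2) ∂π := lintegral_union_le _ _ _
      _ ≤ ((∫⁻ p in T, ENNReal.ofReal (g p.1 p.2) ∂π)
            + ∫⁻ p in T', ENNReal.ofReal (g p.1 p.2) ∂π)
            + ∫⁻ p in D, ENNReal.ofReal (g p.1 p.2) ∂π := by
          gcongr
          exact lintegral_union_le _ _ _
      _ = (∫⁻ p in T, ENNReal.ofReal (g p.1 p.2) ∂π)
            + (∫⁻ p in T, ENNReal.ofReal (g p.1 p.2) ∂π) := by
          rw [hswap, hDzero, add_zero]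
      _ ≤ ENNReal.ofReal (Bint * J) + ENNReal.ofReal (Bint * J) := by
          gcongr
      _ = ENNReal.ofReal (2 * (Bint * J)) := by
          rw [← ENNReal.ofReal_add (mul_nonneg hBnn hJnn) (mul_nonneg hBnn hJnn)]
          congr 1
          ring
  -- relate LHS to I
  have hprodμ : μ.prod μ = π.restrict S := by
    rw [hμdef, hπdef, hSdef, Measure.prod_restrict]
  have haenn : 0 ≤ᵐ[μ.prod μ] fun p : ℝ × ℝ => g p.1 p.2 := by
    rw [hprodμ]
    refine (ae_restrict_iff' hSm).2 (ae_of_all _ (fun p hp => ?_))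
    exact hgnn p.1 p.2 hp.1.1.le hp.2.1.le
  have hintg : Integrable (fun p : ℝ × ℝ => g p.1 p.2) (μ.prod μ) := by
    refine ⟨hgm.aestronglyMeasurable, ?_⟩
    rw [hasFiniteIntegral_iff_ofReal haenn, hprodμ]
    exact lt_of_le_of_lt hIbound ENNReal.ofReal_lt_top
  have hiter : (∫ u, ∫ v, g u v ∂μ ∂μ) = ∫ p, g p.1 p.2 ∂(μ.prod μ) :=
    MeasureTheory.integral_integral hintg
  have hlhs2 : (∫ p, g p.1 p.2 ∂(μ.prod μ)) = I.toReal := by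
    rw [integral_eq_lintegral_of_nonneg_ae haenn hgm.aestronglyMeasurable, hprodμ, hIdef]
  have hLHS : (∫ u in (0:ℝ)..t, ∫ v in (0:ℝ)..t, g u v) = I.toReal := by
    simp_rw [intervalIntegral.integral_of_le ht.le]
    rw [show (∫ u in Set.Ioc (0:ℝ) t, ∫ v in Set.Ioc (0:ℝ) t, g u v)
        = ∫ u, ∫ v, g u v ∂μ ∂μ by rw [hIoc], hiter, hlhs2]
  calc (∫ u in (0:ℝ)..t, ∫ v in (0:ℝ)..t, g u v) = I.toReal := hLHS
    _ ≤ (ENNReal.ofReal (2 * (Bint * J))).toReal :=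
        ENNReal.toReal_mono ENNReal.ofReal_ne_top hIbound
    _ = 2 * (Bint * J) := ENNReal.toReal_ofReal (by positivity)
    _ = 2 * betaFn (1 - α) (2 * H - 1) * J := by rw [hBeq]; ring
end

section
/- Let X be a Hilbert space, A_c a bounded linear operator on a finite-dimensional subspace N, and 𝓕_c : N³ → N a continuous symmetric trilinear map satisfying ⟨𝓕_c(φ+v,φ+v,φ+v), v⟩ ≤ C_η ‖φ‖⁴ − η ‖v‖⁴ for all v,φ ∈ N (with η, C_η > 0). If c : [0,T₀] → N is C¹ and solves ∂_T c = A_c(c + b̃) + 𝓕_c(c+b̃, c+b̃, c+b̃) + b̃ for a continuous b̃ : [0,T₀] → N, then there exists a constant K depending only on T₀, ‖A_c‖, η, C_η such that sup_{T∈[0,T₀]} ‖c(T)‖² ≤ K (‖c(0)‖² + 1 + sup_{T∈[0,T₀]} ‖b̃(T)‖⁴). -/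
open Set
open scoped RealInnerProductSpace

set_option maxHeartbeats 1000000 in
/-- Let `N` be a finite-dimensional Hilbert space, `A` a bounded linear
operator on `N`, and `η, C_η > 0`. There is a constant `K` (depending only on `T₀`, `‖A‖`,
`η`, `C_η`) such that: for every continuous symmetric trilinear map `F` satisfying the
quartic sign condition `⟪F(φ+v)(φ+v)(φ+v), v⟫ ≤ C_η ‖φ‖⁴ − η ‖v‖⁴`, every continuous
`b̃ : [0,T₀] → N` and every `C¹` solution `c` of
`∂_T c = A(c + b̃) + F(c+b̃, c+b̃, c+b̃) + b̃`, one has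
`sup_{T ∈ [0,T₀]} ‖c(T)‖² ≤ K (‖c(0)‖² + 1 + sup_{T ∈ [0,T₀]} ‖b̃(T)‖⁴)`. -/
theorem stmt12 {N : Type*} [NormedAddCommGroup N] [InnerProductSpace ℝ N]
    [FiniteDimensional ℝ N]
    (T₀ : ℝ) (hT₀ : 0 < T₀) (A : N →L[ℝ] N) (η Cη : ℝ) (hη : 0 < η) (hCη : 0 < Cη) :
    ∃ K > 0, ∀ F : N →L[ℝ] N →L[ℝ] N →L[ℝ] N,
      (∀ u v w : N, F u v w = F v u w ∧ F u v w = F u w v) →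
      (∀ v φ : N, ⟪F (φ + v) (φ + v) (φ + v), v⟫ ≤ Cη * ‖φ‖ ^ 4 - η * ‖v‖ ^ 4) →
      ∀ b c : ℝ → N, ContinuousOn b (Icc 0 T₀) →
      (∀ T ∈ Icc (0:ℝ) T₀,
        HasDerivAt c (A (c T + b T) + F (c T + b T) (c T + b T) (c T + b T) + b T) T) →
      ∀ T ∈ Icc (0:ℝ) T₀,
        ‖c T‖ ^ 2 ≤ K * (‖c 0‖ ^ 2 + 1 + (⨆ S : Icc (0:ℝ) T₀, ‖b (S : ℝ)‖) ^ 4) := by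
  set L : ℝ := 3 * ‖A‖ + 1 with hL
  set C : ℝ := ‖A‖ + 1 + 2 * Cη with hC
  have hAnn : (0:ℝ) ≤ ‖A‖ := norm_nonneg A
  have hL1 : (1:ℝ) ≤ L := by simp only [hL]; linarith
  have hC1 : (1:ℝ) ≤ C := by simp only [hC]; linarith
  refine ⟨Real.exp (L * T₀) * C, by positivity, ?_⟩
  intro F hFsym hFq b c hb hc
  set B : ℝ := ⨆ S : Icc (0:ℝ) T₀, ‖b (S : ℝ)‖ with hBdef
  -- B is an upper bound on ‖b‖
  have hBdd : BddAbove (range fun S : Icc (0:ℝ) T₀ => ‖b (S : ℝ)‖) := by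
    have h1 : (range fun S : Icc (0:ℝ) T₀ => ‖b (S : ℝ)‖)
        = (fun t => ‖b t‖) '' Icc (0:ℝ) T₀ := by
      rw [show (fun S : Icc (0:ℝ) T₀ => ‖b (S : ℝ)‖)
          = (fun t => ‖b t‖) ∘ (Subtype.val) from rfl, Set.range_comp, Subtype.range_coe]
    rw [h1]
    exact (isCompact_Icc.image_of_continuousOn hb.norm).bddAbove
  have hBle : ∀ t ∈ Icc (0:ℝ) T₀, ‖b t‖ ≤ B := fun t ht =>
    le_ciSup hBdd (⟨t, ht⟩ : Icc (0:ℝ) T₀)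
  have hB0 : (0:ℝ) ≤ B :=
    le_trans (norm_nonneg _) (hBle 0 ⟨le_refl 0, hT₀.le⟩)
  set ε : ℝ := C * (1 + B ^ 4) with hε
  have hε0 : 0 ≤ ε := by positivity
  -- the energy function and its derivative
  set g : ℝ → ℝ := fun t => ‖c t‖ ^ 2 with hg
  set v : ℝ → N := fun t =>
    A (c t + b t) + F (c t + b t) (c t + b t) (c t + b t) + b t with hv
  have hg' : ∀ t ∈ Icc (0:ℝ) T₀, HasDerivAt g (2 * ⟪v t, c t⟫) t := by
    intro t ht
    have h := (hc t ht).inner ℝ (hc t ht)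
    have h2 : (fun s => ⟪c s, c s⟫) = g := by
      funext s; rw [real_inner_self_eq_norm_sq]
    rw [h2] at h
    refine HasDerivAt.congr_deriv h ?_
    rw [real_inner_comm (c t) (v t)]; ring
  -- continuity of g on the interval
  have hgc : ContinuousOn g (Icc 0 T₀) := fun t ht =>
    (((hc t ht).continuousAt.continuousWithinAt).norm.pow 2)
  -- differential inequality
  have hbound : ∀ t ∈ Ico (0:ℝ) T₀, 2 * ⟪v t, c t⟫ ≤ L * g t + ε := by
    intro t ht
    have ht' : t ∈ Icc (0:ℝ) T₀ := Ico_subset_Icc_self ht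
    have h1 : ⟪A (c t + b t), c t⟫ ≤ ‖A‖ * (‖c t‖ + ‖b t‖) * ‖c t‖ := by
      calc ⟪A (c t + b t), c t⟫ ≤ ‖A (c t + b t)‖ * ‖c t‖ := real_inner_le_norm _ _
        _ ≤ (‖A‖ * ‖c t + b t‖) * ‖c t‖ := by
            gcongr; exact A.le_opNorm _
        _ ≤ ‖A‖ * (‖c t‖ + ‖b t‖) * ‖c t‖ := by
            gcongr; exact norm_add_le _ _
    have h2 : ⟪F (c t + b t) (c t + b t) (c t + b t), c t⟫
        ≤ Cη * ‖b t‖ ^ 4 - η * ‖c t‖ ^ 4 := by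
      have := hFq (c t) (b t)
      rwa [add_comm (b t) (c t)] at this
    have h3 : ⟪b t, c t⟫ ≤ ‖b t‖ * ‖c t‖ := real_inner_le_norm _ _
    have hsum : ⟪v t, c t⟫ = ⟪A (c t + b t), c t⟫
        + ⟪F (c t + b t) (c t + b t) (c t + b t), c t⟫ + ⟪b t, c t⟫ := by
      simp [hv, inner_add_left]
    have hbB : ‖b t‖ ≤ B := hBle t ht'
    have hb2 : ‖b t‖ ^ 2 ≤ B ^ 2 := pow_le_pow_left₀ (norm_nonneg _) hbB _
    have hb4 : ‖b t‖ ^ 4 ≤ B ^ 4 := pow_le_pow_left₀ (norm_nonneg _) hbB _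
    have hB24 : B ^ 2 ≤ 1 + B ^ 4 := by nlinarith [sq_nonneg (B ^ 2 - 1)]
    have hcnn : (0:ℝ) ≤ ‖c t‖ := norm_nonneg _
    have hbnn : (0:ℝ) ≤ ‖b t‖ := norm_nonneg _
    have hc4 : (0:ℝ) ≤ ‖c t‖ ^ 4 := by positivity
    rw [hsum]
    simp only [hg, hL, hε, hC]
    nlinarith [sq_nonneg (‖c t‖ - ‖b t‖), mul_nonneg hη.le hc4,
      mul_nonneg hAnn (sq_nonneg (‖c t‖ - ‖b t‖))]
  -- Gronwall
  have hGron : ∀ T ∈ Icc (0:ℝ) T₀, g T ≤ gronwallBound (g 0) L ε (T - 0) := by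
    apply le_gronwallBound_of_liminf_deriv_right_le hgc
    · intro x hx r hr
      have hd := ((hg' x (Ico_subset_Icc_self hx)).hasDerivWithinAt
        (s := Ici x)).liminf_right_slope_le hr
      refine hd.mono fun z hz => ?_
      rwa [slope_def_field, div_eq_inv_mul] at hz
    · exact le_refl _
    · exact hbound
  intro T hT
  have hg0 : (0:ℝ) ≤ g 0 := by positivity
  have hLne : L ≠ 0 := by linarith
  have key := hGron T hT
  rw [sub_zero, gronwallBound_of_K_ne_0 hLne] at key
  have hE1 : Real.exp (L * T) ≤ Real.exp (L * T₀) := by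
    apply Real.exp_le_exp.2
    have : (0:ℝ) ≤ L := by linarith
    exact mul_le_mul_of_nonneg_left hT.2 this
  have hE2 : (1:ℝ) ≤ Real.exp (L * T) := by
    rw [← Real.exp_zero]
    apply Real.exp_le_exp.2
    exact mul_nonneg (by linarith) hT.1
  have hεL : ε / L ≤ ε := div_le_self hε0 hL1
  have hεLnn : 0 ≤ ε / L := div_nonneg hε0 (by linarith)
  have hEpos : 0 < Real.exp (L * T₀) := Real.exp_pos _
  calc ‖c T‖ ^ 2 = g T := rfl
    _ ≤ g 0 * Real.exp (L * T) + ε / L * (Real.exp (L * T) - 1) := key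
    _ ≤ Real.exp (L * T₀) * C * (g 0 + 1 + B ^ 4) := by
        have hεexp : ε / L * (Real.exp (L * T) - 1) ≤ ε * Real.exp (L * T₀) := by
          calc ε / L * (Real.exp (L * T) - 1) ≤ ε * (Real.exp (L * T) - 1) := by
                apply mul_le_mul_of_nonneg_right hεL; linarith
            _ ≤ ε * Real.exp (L * T₀) := by
                apply mul_le_mul_of_nonneg_left _ hε0; linarith
        have h1 : g 0 * Real.exp (L * T) ≤ g 0 * Real.exp (L * T₀) :=
          mul_le_mul_of_nonneg_left hE1 hg0
        have h2 : ε * Real.exp (L * T₀) = Real.exp (L * T₀) * (C * (1 + B ^ 4)) := by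
          rw [hε]; ring
        have h3 : Real.exp (L * T₀) * g 0 ≤ Real.exp (L * T₀) * C * g 0 := by
          nlinarith [mul_nonneg hEpos.le hg0]
        calc g 0 * Real.exp (L * T) + ε / L * (Real.exp (L * T) - 1)
            ≤ g 0 * Real.exp (L * T₀) + ε * Real.exp (L * T₀) := by linarith
          _ = Real.exp (L * T₀) * g 0 + Real.exp (L * T₀) * (C * (1 + B ^ 4)) := by
              rw [hε]; ring
          _ ≤ Real.exp (L * T₀) * C * g 0 + Real.exp (L * T₀) * (C * (1 + B ^ 4)) := by
              linarith
          _ = Real.exp (L * T₀) * C * (g 0 + 1 + B ^ 4) := by ring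
end

section
/- Attractivity a priori bound: under the semigroup estimates ‖e^{tL}‖ ≤ M and ‖e^{tL}‖_{L(X^{−α},X)} ≤ M(1+t^{−α}) with α ∈ [0,1), suppose u is a maximal mild solution of du = (Lu + ε²Au + 𝓕(u)) dt + ε^{2H+1} dW with ‖A‖_{L(X,X^{−α})} ≤ C, ‖𝓕(u)‖_{X^{−α}} ≤ C‖u‖³, ‖u₀‖ ≤ δ ε^{1−κ}, and suppose the stochastic convolution satisfies sup_{t∈[0,t_ε]} ‖W_L(t)‖ ≤ ε^{−2H−κ} where t_ε = O(ln(ε^{−2H})) and κ ∈ [0,1). Then for any D > Mδ + 2 and ε sufficiently small, sup_{t∈[0,t_ε]} ‖u(t)‖ ≤ D ε^{1−κ}. -/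
open MeasureTheory Set

set_option maxHeartbeats 1000000

/-- **attractivity a priori bound.** Under the semigroup estimates
`‖e^{tL}‖ ≤ M` and `‖e^{tL}‖_{L(X^{−α},X)} ≤ M(1+t^{−α})` (the space `Y` plays the role of
`X^{−α}`, `S` of the semigroup on `X` and `Ŝ` of its extension `X^{−α} → X`), suppose `u`
is a mild solution of `du = (Lu + ε²Au + 𝓕(u)) dt + ε^{2H+1} dW` with
`‖A‖_{L(X,X^{−α})} ≤ C`, `‖𝓕(u)‖_{X^{−α}} ≤ C‖u‖³`, `‖u₀‖ ≤ δ ε^{1−κ}`, and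
`sup_{t ∈ [0,t_ε]} ‖W_L(t)‖ ≤ ε^{−2H−κ}` where `t_ε = O(ln(ε^{−2H}))` and `κ ∈ [0,1)`.
Then for every `D > Mδ + 2` and `ε` sufficiently small,
`sup_{t ∈ [0,t_ε]} ‖u(t)‖ ≤ D ε^{1−κ}`. -/
theorem stmt17 {X Y : Type*} [NormedAddCommGroup X] [InnerProductSpace ℝ X] [CompleteSpace X]
    [NormedAddCommGroup Y] [NormedSpace ℝ Y]
    (α H κ M δ C Cl : ℝ)
    (hα : α ∈ Ico (0:ℝ) 1) (hH : H ∈ Set.Ioo (0:ℝ) 1) (hκ : κ ∈ Ico (0:ℝ) 1)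
    (hM : 1 ≤ M) (hδ : 0 < δ) (hC : 0 < C) (hCl : 0 < Cl)
    (S : ℝ → X →L[ℝ] X) (Shat : ℝ → Y →L[ℝ] X) (A : X →L[ℝ] Y) (F : X → Y)
    (hS : ∀ t : ℝ, 0 ≤ t → ‖S t‖ ≤ M)
    (hShat : ∀ t : ℝ, 0 < t → ‖Shat t‖ ≤ M * (1 + t ^ (-α)))
    (hA : ‖A‖ ≤ C) (hF : ∀ v : X, ‖F v‖ ≤ C * ‖v‖ ^ 3) :
    ∀ D : ℝ, M * δ + 2 < D → ∃ ε₀ > 0, ∀ ε : ℝ, 0 < ε → ε ≤ ε₀ →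
      ∀ (tε : ℝ) (u : ℝ → X) (u₀ : X) (WL : ℝ → X),
        0 ≤ tε → tε ≤ Cl * Real.log (ε ^ (-(2 * H))) →
        ContinuousOn u (Icc 0 tε) →
        (∀ t ∈ Icc (0:ℝ) tε,
          u t = S t u₀ +
            (∫ τ in (0:ℝ)..t, (Shat (t - τ)) (ε ^ 2 • A (u τ) + F (u τ))) +
            ε ^ (2 * H + 1) • WL t) →
        ‖u₀‖ ≤ δ * ε ^ (1 - κ) →
        (∀ t ∈ Icc (0:ℝ) tε, ‖WL t‖ ≤ ε ^ (-(2 * H) - κ)) →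
        ∀ t ∈ Icc (0:ℝ) tε, ‖u t‖ ≤ D * ε ^ (1 - κ) := by
  obtain ⟨hα0, hα1⟩ := hα
  obtain ⟨hH0, hH1⟩ := hH
  obtain ⟨hκ0, hκ1⟩ := hκ
  intro D hD
  have hM0 : (0:ℝ) < M := lt_of_lt_of_le one_pos hM
  have hD0 : (0:ℝ) < D := by nlinarith
  have h1α : (0:ℝ) < 1 - α := by linarith
  set c₀ : ℝ := (1 - α) / (M * C * (D + D ^ 3)) with hc₀def
  have hc₀ : 0 < c₀ := by positivity
  -- smallness of ε^{2-2κ}(1 + 4 H Cl (-log ε)) near 0⁺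
  have h22κ : (0:ℝ) < 2 - 2*κ := by linarith
  have hφ : Filter.Tendsto
      (fun ε : ℝ => ε ^ (2 - 2*κ) + (4 * H * Cl) * (-(Real.log ε * ε ^ (2 - 2*κ))))
      (nhdsWithin 0 (Set.Ioi 0)) (nhds 0) := by
    have h1 : Filter.Tendsto (fun ε : ℝ => ε ^ (2 - 2*κ))
        (nhdsWithin 0 (Set.Ioi 0)) (nhds 0) := by
      have hc := (Real.continuousAt_rpow_const 0 (2 - 2*κ) (Or.inr h22κ.le)).tendsto
      rw [Real.zero_rpow h22κ.ne'] at hc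
      exact hc.mono_left nhdsWithin_le_nhds
    have h2 : Filter.Tendsto (fun ε : ℝ => (4 * H * Cl) * (-(Real.log ε * ε ^ (2 - 2*κ))))
        (nhdsWithin 0 (Set.Ioi 0)) (nhds 0) := by
      have := ((tendsto_log_mul_rpow_nhdsGT_zero h22κ).neg).const_mul (4 * H * Cl)
      simpa using this
    simpa using h1.add h2
  have hev : ∀ᶠ ε in nhdsWithin (0:ℝ) (Set.Ioi 0),
      (ε ^ (2 - 2*κ) + (4 * H * Cl) * (-(Real.log ε * ε ^ (2 - 2*κ))) < c₀ ∧ ε < 1) := by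
    have hev1 := hφ.eventually_lt_const hc₀
    have hev2 : ∀ᶠ ε in nhdsWithin (0:ℝ) (Set.Ioi 0), ε < 1 := by
      filter_upwards [Ioo_mem_nhdsGT_of_mem (by norm_num : (0:ℝ) ∈ Ico (0:ℝ) 1)] with x hx
      exact hx.2
    exact hev1.and hev2
  obtain ⟨ε₀, hε₀, hsub⟩ := mem_nhdsGT_iff_exists_Ioc_subset.1 hev
  refine ⟨ε₀, hε₀, ?_⟩
  intro ε hε hεle tε u u₀ WL htε0 htεle hu hmild hu₀ hWL
  obtain ⟨hsmall, hε1⟩ := hsub ⟨hε, hεle⟩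
  set p : ℝ := ε ^ (1 - κ) with hpdef
  have hp : 0 < p := Real.rpow_pos_of_pos hε _
  -- the key a priori estimate
  have key : ∀ t ∈ Icc (0:ℝ) tε, (∀ τ ∈ Ioo (0:ℝ) t, ‖u τ‖ ≤ D * p) →
      ‖u t‖ ≤ (M * δ + 2) * p := by
    intro t ht hb
    have ht0 : 0 ≤ t := ht.1
    set K : ℝ := C * (ε ^ 2 * (D * p) + (D * p) ^ 3) with hKdef
    have hK0 : 0 ≤ K := by positivity
    -- pointwise bound on the integrand
    have hIoc : Set.uIoc (0:ℝ) t = Ioc 0 t := uIoc_of_le ht0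
    have hres : (volume.restrict (Set.uIoc (0:ℝ) t)) {t} = 0 := by
      rw [Measure.restrict_apply (measurableSet_singleton t)]
      exact measure_mono_null inter_subset_left Real.volume_singleton
    have hne : ∀ᵐ τ ∂(volume.restrict (Set.uIoc (0:ℝ) t)), τ ≠ t := by
      refine ae_iff.2 ?_
      simpa using hres
    have hmem : ∀ᵐ τ ∂(volume.restrict (Set.uIoc (0:ℝ) t)), τ ∈ Set.uIoc (0:ℝ) t :=
      ae_restrict_mem measurableSet_uIoc
    have hptw : ∀ᵐ τ ∂(volume.restrict (Set.uIoc (0:ℝ) t)),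
        ‖(Shat (t - τ)) (ε ^ 2 • A (u τ) + F (u τ))‖ ≤ M * (1 + (t - τ) ^ (-α)) * K := by
      filter_upwards [hmem, hne] with τ hτ hτne
      rw [hIoc] at hτ
      have hτt : τ < t := lt_of_le_of_ne hτ.2 hτne
      have hub : ‖u τ‖ ≤ D * p := hb τ ⟨hτ.1, hτt⟩
      have hst : 0 < t - τ := sub_pos.2 hτt
      have hv : ‖ε ^ 2 • A (u τ) + F (u τ)‖ ≤ K := by
        have hAu : ‖A (u τ)‖ ≤ C * ‖u τ‖ :=
          le_trans (A.le_opNorm (u τ)) (mul_le_mul_of_nonneg_right hA (norm_nonneg _))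
        calc ‖ε ^ 2 • A (u τ) + F (u τ)‖ ≤ ‖ε ^ 2 • A (u τ)‖ + ‖F (u τ)‖ := norm_add_le _ _
          _ = ε ^ 2 * ‖A (u τ)‖ + ‖F (u τ)‖ := by
              rw [norm_smul, Real.norm_eq_abs, abs_of_nonneg (sq_nonneg ε)]
          _ ≤ ε ^ 2 * (C * ‖u τ‖) + C * ‖u τ‖ ^ 3 := by
              have h1 := hF (u τ)
              have h2 := mul_le_mul_of_nonneg_left hAu (sq_nonneg ε)
              linarith
          _ ≤ ε ^ 2 * (C * (D * p)) + C * (D * p) ^ 3 := by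
              have h3 : ‖u τ‖ ^ 3 ≤ (D * p) ^ 3 := by
                apply pow_le_pow_left₀ (norm_nonneg _) hub
              have h4 : C * ‖u τ‖ ≤ C * (D * p) := mul_le_mul_of_nonneg_left hub hC.le
              have h5 := mul_le_mul_of_nonneg_left h4 (sq_nonneg ε)
              have h6 := mul_le_mul_of_nonneg_left h3 hC.le
              linarith
          _ = K := by rw [hKdef]; ring
      have hM1 : (0:ℝ) ≤ M * (1 + (t - τ) ^ (-α)) := by
        have h7 : (0:ℝ) ≤ (t - τ) ^ (-α) := Real.rpow_nonneg hst.le _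
        nlinarith
      calc ‖(Shat (t - τ)) (ε ^ 2 • A (u τ) + F (u τ))‖
          ≤ ‖Shat (t - τ)‖ * ‖ε ^ 2 • A (u τ) + F (u τ)‖ := (Shat (t - τ)).le_opNorm _
        _ ≤ (M * (1 + (t - τ) ^ (-α))) * K :=
            mul_le_mul (hShat _ hst) hv (norm_nonneg _) hM1
        _ = M * (1 + (t - τ) ^ (-α)) * K := by ring
    -- integrability and value of the bounding integral
    have hint1 : IntervalIntegrable (fun τ : ℝ => (t - τ) ^ (-α)) volume 0 t := by
      have h0 : IntervalIntegrable (fun s : ℝ => s ^ (-α)) volume 0 t :=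
        intervalIntegral.intervalIntegrable_rpow' (by linarith)
      simpa using (h0.comp_sub_left t).symm
    have hgint : IntervalIntegrable (fun τ : ℝ => M * (1 + (t - τ) ^ (-α)) * K)
        volume 0 t :=
      ((intervalIntegrable_const.add hint1).const_mul M).mul_const K
    have hIval : (∫ τ in (0:ℝ)..t, (t - τ) ^ (-α)) = t ^ (1 - α) / (1 - α) := by
      rw [intervalIntegral.integral_comp_sub_left (fun s : ℝ => s ^ (-α)) t]
      simp only [sub_zero, sub_self]
      rw [integral_rpow (Or.inl (by linarith))]
      rw [Real.zero_rpow (by linarith : -α + 1 ≠ 0)]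
      rw [show -α + 1 = 1 - α by ring]
      ring
    have hIg : (∫ τ in (0:ℝ)..t, M * (1 + (t - τ) ^ (-α)) * K)
        = M * K * (t + t ^ (1 - α) / (1 - α)) := by
      have heq : (fun τ : ℝ => M * (1 + (t - τ) ^ (-α)) * K)
          = fun τ : ℝ => (M * K) + (M * K) * ((t - τ) ^ (-α)) := by
        funext τ; ring
      rw [heq, intervalIntegral.integral_add intervalIntegrable_const (hint1.const_mul _),
        intervalIntegral.integral_const, intervalIntegral.integral_const_mul, hIval]
      simp only [smul_eq_mul, sub_zero]
      ring
    have hTnn : (0:ℝ) ≤ t + t ^ (1 - α) / (1 - α) :=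
      add_nonneg ht0 (div_nonneg (Real.rpow_nonneg ht0 _) h1α.le)
    have h2 : ‖∫ τ in (0:ℝ)..t, (Shat (t - τ)) (ε ^ 2 • A (u τ) + F (u τ))‖
        ≤ M * K * (t + t ^ (1 - α) / (1 - α)) := by
      have h8 := intervalIntegral.norm_integral_le_abs_of_norm_le hptw hgint
      rwa [hIg, abs_of_nonneg (mul_nonneg (mul_nonneg hM0.le hK0) hTnn)] at h8
    -- bound K
    have hK : K ≤ C * (D + D ^ 3) * ε ^ (3 - 3*κ) := by
      have hp3 : (D * p) ^ 3 = D ^ 3 * ε ^ (3 - 3*κ) := by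
        rw [mul_pow, hpdef, ← Real.rpow_natCast (ε ^ (1 - κ)) 3, ← Real.rpow_mul hε.le,
          show (1 - κ) * (3:ℕ) = 3 - 3*κ by push_cast; ring]
      have he2 : ε ^ 2 * p = ε ^ (3 - κ) := by
        rw [hpdef, ← Real.rpow_natCast ε 2, ← Real.rpow_add hε,
          show ((2:ℕ):ℝ) + (1 - κ) = 3 - κ by push_cast; ring]
      have he3 : ε ^ (3 - κ) ≤ ε ^ (3 - 3*κ) :=
        Real.rpow_le_rpow_of_exponent_ge hε hε1.le (by linarith)
      have h5 : ε ^ 2 * (D * p) ≤ D * ε ^ (3 - 3*κ) := by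
        calc ε ^ 2 * (D * p) = D * (ε ^ 2 * p) := by ring
          _ = D * ε ^ (3 - κ) := by rw [he2]
          _ ≤ D * ε ^ (3 - 3*κ) := mul_le_mul_of_nonneg_left he3 hD0.le
      calc K = C * (ε ^ 2 * (D * p) + (D * p) ^ 3) := hKdef
        _ ≤ C * (D * ε ^ (3 - 3*κ) + D ^ 3 * ε ^ (3 - 3*κ)) := by
            rw [hp3]
            have h9 := mul_le_mul_of_nonneg_left
              (add_le_add h5 (le_refl (D ^ 3 * ε ^ (3 - 3*κ)))) hC.le
            linarith
        _ = C * (D + D ^ 3) * ε ^ (3 - 3*κ) := by ring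
    -- bound the time factor
    have htpow : t ^ (1 - α) ≤ 1 + tε := by
      rcases le_total t 1 with h | h
      · exact le_trans (Real.rpow_le_one ht0 h h1α.le) (by linarith)
      · calc t ^ (1 - α) ≤ t ^ (1:ℝ) :=
              Real.rpow_le_rpow_of_exponent_le h (by linarith)
          _ = t := Real.rpow_one t
          _ ≤ 1 + tε := by linarith [ht.2]
    have hT : t + t ^ (1 - α) / (1 - α) ≤ (1 + 2 * tε) / (1 - α) := by
      have h6 : t ≤ tε / (1 - α) := by
        rw [le_div_iff₀ h1α]
        nlinarith [ht.2]
      have h7 : t ^ (1 - α) / (1 - α) ≤ (1 + tε) / (1 - α) :=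
        (div_le_div_iff_of_pos_right h1α).2 htpow
      calc t + t ^ (1 - α) / (1 - α) ≤ tε / (1 - α) + (1 + tε) / (1 - α) :=
            add_le_add h6 h7
        _ = (1 + 2 * tε) / (1 - α) := by ring
    -- smallness: the middle term is at most p
    have hmid : M * K * (t + t ^ (1 - α) / (1 - α)) ≤ p := by
      have hsplit : ε ^ (3 - 3*κ) = ε ^ (2 - 2*κ) * p := by
        rw [hpdef, ← Real.rpow_add hε, show 2 - 2*κ + (1 - κ) = 3 - 3*κ by ring]
      have hlogε : tε ≤ 2 * H * Cl * (-Real.log ε) := by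
        rw [Real.log_rpow hε] at htεle
        have : Cl * (-(2 * H) * Real.log ε) = 2 * H * Cl * (-Real.log ε) := by ring
        linarith
      have hq0 : (0:ℝ) ≤ ε ^ (2 - 2*κ) := Real.rpow_nonneg hε.le _
      have hb1 : ε ^ (2 - 2*κ) * (1 + 2 * tε)
          ≤ ε ^ (2 - 2*κ) + (4 * H * Cl) * (-(Real.log ε * ε ^ (2 - 2*κ))) := by
        have h10 : 2 * tε ≤ 4 * H * Cl * (-Real.log ε) := by linarith
        nlinarith [mul_le_mul_of_nonneg_right h10 hq0]
      have hfrac : (0:ℝ) < M * C * (D + D ^ 3) / (1 - α) := by positivity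
      have hbr : M * C * (D + D ^ 3) / (1 - α) * (ε ^ (2 - 2*κ) * (1 + 2 * tε)) ≤ 1 := by
        have h11 := mul_le_mul_of_nonneg_left hb1 hfrac.le
        have h12 := mul_le_mul_of_nonneg_left hsmall.le hfrac.le
        have hcc : M * C * (D + D ^ 3) / (1 - α) * c₀ = 1 := by
          rw [hc₀def]
          field_simp
        linarith
      calc M * K * (t + t ^ (1 - α) / (1 - α))
          ≤ M * (C * (D + D ^ 3) * ε ^ (3 - 3*κ)) * ((1 + 2 * tε) / (1 - α)) := by
            apply mul_le_mul (mul_le_mul_of_nonneg_left hK hM0.le) hT hTnn (by positivity)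
        _ = (M * C * (D + D ^ 3) / (1 - α) * (ε ^ (2 - 2*κ) * (1 + 2 * tε))) * p := by
            rw [hsplit]; ring
        _ ≤ 1 * p := mul_le_mul_of_nonneg_right hbr hp.le
        _ = p := one_mul p
    -- the initial-datum term
    have h1 : ‖(S t) u₀‖ ≤ M * (δ * p) := by
      calc ‖(S t) u₀‖ ≤ ‖S t‖ * ‖u₀‖ := (S t).le_opNorm u₀
        _ ≤ M * (δ * p) := mul_le_mul (hS t ht0) hu₀ (norm_nonneg _) hM0.le
    -- the stochastic term
    have h3 : ‖ε ^ (2 * H + 1) • WL t‖ ≤ p := by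
      have hpos : (0:ℝ) < ε ^ (2 * H + 1) := Real.rpow_pos_of_pos hε _
      rw [norm_smul, Real.norm_eq_abs, abs_of_pos hpos]
      calc ε ^ (2 * H + 1) * ‖WL t‖ ≤ ε ^ (2 * H + 1) * ε ^ (-(2 * H) - κ) :=
            mul_le_mul_of_nonneg_left (hWL t ht) hpos.le
        _ = p := by
            rw [hpdef, ← Real.rpow_add hε, show 2 * H + 1 + (-(2 * H) - κ) = 1 - κ by ring]
    -- combine
    rw [hmild t ht]
    calc ‖(S t) u₀ + (∫ τ in (0:ℝ)..t, (Shat (t - τ)) (ε ^ 2 • A (u τ) + F (u τ)))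
          + ε ^ (2 * H + 1) • WL t‖
        ≤ ‖(S t) u₀‖ + ‖∫ τ in (0:ℝ)..t, (Shat (t - τ)) (ε ^ 2 • A (u τ) + F (u τ))‖
          + ‖ε ^ (2 * H + 1) • WL t‖ := norm_add₃_le
      _ ≤ M * (δ * p) + p + p := by
          have := le_trans h2 hmid
          linarith
      _ = (M * δ + 2) * p := by ring
  -- continuity argument
  by_contra hcon
  push_neg at hcon
  obtain ⟨t₁, ht₁, ht₁'⟩ := hcon
  set B : Set ℝ := Icc (0:ℝ) tε ∩ {t | D * p < ‖u t‖} with hBdef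
  have hBne : B.Nonempty := ⟨t₁, ht₁, ht₁'⟩
  have hBbd : BddBelow B := ⟨0, fun x hx => hx.1.1⟩
  set t₀ := sInf B with ht₀def
  have hC' : IsClosed (Icc (0:ℝ) tε ∩ (fun t => ‖u t‖) ⁻¹' Ici (D * p)) :=
    hu.norm.preimage_isClosed_of_isClosed isClosed_Icc isClosed_Ici
  have ht₀mem : t₀ ∈ Icc (0:ℝ) tε ∩ (fun t => ‖u t‖) ⁻¹' Ici (D * p) := by
    have hsub2 : B ⊆ Icc (0:ℝ) tε ∩ (fun t => ‖u t‖) ⁻¹' Ici (D * p) :=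
      fun x hx => ⟨hx.1, mem_preimage.2 (mem_Ici.2 (le_of_lt hx.2))⟩
    exact hC'.closure_subset_iff.2 hsub2 (csInf_mem_closure hBne hBbd)
  have hbelow : ∀ τ ∈ Ioo (0:ℝ) t₀, ‖u τ‖ ≤ D * p := by
    intro τ hτ
    by_contra hcc
    push_neg at hcc
    have hτB : τ ∈ B := ⟨⟨hτ.1.le, le_trans hτ.2.le ht₀mem.1.2⟩, hcc⟩
    exact absurd (csInf_le hBbd hτB) (not_le.2 hτ.2)
  have hkey := key t₀ ht₀mem.1 hbelow
  have hlt : (M * δ + 2) * p < D * p := mul_lt_mul_of_pos_right hD hp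
  have := ht₀mem.2
  simp only [mem_preimage, mem_Ici] at this
  linarith
end
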